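/- arXiv:1705.05261 — 6 statements merged into one kernel-verified Lean document; each statement's English description precedes it below -/
import Mathlib

section
/- Let Φ₁, Φ₂ ∈ H_R(G,σ) have supports contained in Hg₁H and Hg₂H respectively. If g₁ or g₂ normalizes H, then the support of Φ₁*Φ₂ is contained in Hg₁g₂H and (Φ₁*Φ₂)(g₁g₂) = Φ₁(g₁)∘Φ₂(g₂). -/
open scoped BigOperators

/-- The double coset `H g H` of `g` with respect to an (open) subgroup `H`. -/
def doubleCoset {G : Type*} [Group G] (H : Subgroup G) (g : G) : Set G :=
  {x | ∃ h ∈ H, ∃ h' ∈ H, x = h * g * h'}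

/-- A function `Φ : G → End_R(V_σ)` belongs to the Hecke algebra `H_R(G, σ)` if it is
`σ`-bi-equivariant and its support is contained in a finite union of `H`-double cosets. -/
def IsHeckeFun {G R V : Type*} [Group G] [CommRing R] [AddCommGroup V] [Module R V]
    (H : Subgroup G) (σ : ↥H →* Module.End R V) (Φ : G → Module.End R V) : Prop :=
  (∀ (h h' : ↥H) (g : G), Φ (↑h * g * ↑h') = σ h * Φ g * σ h') ∧
  ∃ S : Finset G, ∀ g : G, Φ g ≠ 0 → ∃ s ∈ S, g ∈ doubleCoset H s

/-- Convolution product `(Φ₁ * Φ₂)(g) = ∑_{x ∈ G/H} Φ₁(x) ∘ Φ₂(x⁻¹ g)`. -/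
noncomputable def heckeConv {G R V : Type*} [Group G] [CommRing R] [AddCommGroup V] [Module R V]
    (H : Subgroup G) (Φ₁ Φ₂ : G → Module.End R V) : G → Module.End R V :=
  fun g => ∑ᶠ c : G ⧸ H, Φ₁ (Quotient.out c) * Φ₂ ((Quotient.out c)⁻¹ * g)

open Classical in
/-- The function supported on `H` given by `σ`. -/
noncomputable def heckeUnit {G R V : Type*} [Group G] [CommRing R] [AddCommGroup V] [Module R V]
    (H : Subgroup G) (σ : ↥H →* Module.End R V) : G → Module.End R V :=
  fun g => if hg : g ∈ H then σ ⟨g, hg⟩ else 0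


private lemma normconj {G : Type*} [Group G] {H : Subgroup G} {g a : G}
    (hg : g ∈ Subgroup.normalizer (H : Set G)) (ha : a ∈ H) : g⁻¹ * a * g ∈ H := by
  have := (Subgroup.mem_normalizer_iff.mp ((Subgroup.normalizer (H : Set G)).inv_mem hg) a).mp ha
  simpa using this

private lemma normconj' {G : Type*} [Group G] {H : Subgroup G} {g a : G}
    (hg : g ∈ Subgroup.normalizer (H : Set G)) (ha : a ∈ H) : g * a * g⁻¹ ∈ H :=
  (Subgroup.mem_normalizer_iff.mp hg a).mp ha

private lemma key {G : Type*} [Group G] {H : Subgroup G} {g₁ g₂ y : G}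
    (hnorm : g₁ ∈ Subgroup.normalizer (H : Set G) ∨ g₂ ∈ Subgroup.normalizer (H : Set G))
    (hy1 : y ∈ doubleCoset H g₁) (hy2 : y⁻¹ * (g₁ * g₂) ∈ doubleCoset H g₂) :
    g₁⁻¹ * y ∈ H := by
  obtain ⟨a, ha, b, hb, rfl⟩ := hy1
  obtain ⟨c, hc, d, hd, heq⟩ := hy2
  have hkey : g₁⁻¹ * a * g₁ ∈ H := by
    rcases hnorm with h | h
    · exact normconj h ha
    · have h2 : g₁⁻¹ * a⁻¹ * g₁ = b * (c * g₂ * d) * g₂⁻¹ := by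
        rw [← heq]; group
      rw [show b * (c * g₂ * d) * g₂⁻¹ = b * c * (g₂ * d * g₂⁻¹) by group] at h2
      have hmem : g₁⁻¹ * a⁻¹ * g₁ ∈ H := by
        rw [h2]; exact H.mul_mem (H.mul_mem hb hc) (normconj' h hd)
      have : g₁⁻¹ * a * g₁ = (g₁⁻¹ * a⁻¹ * g₁)⁻¹ := by group
      rw [this]; exact H.inv_mem hmem
  have : g₁⁻¹ * (a * g₁ * b) = (g₁⁻¹ * a * g₁) * b := by group
  rw [this]; exact H.mul_mem hkey hb

/-- If `Φ₁, Φ₂` in the Hecke algebra `H_R(G,σ)` are supported in `H g₁ H` and `H g₂ H`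
respectively, and `g₁` or `g₂` normalizes `H`, then `Φ₁ * Φ₂` is supported in `H g₁ g₂ H`
and `(Φ₁ * Φ₂)(g₁ g₂) = Φ₁(g₁) ∘ Φ₂(g₂)`. -/
theorem statement1 {G R V : Type*} [Group G] [CommRing R] [AddCommGroup V] [Module R V]
    (H : Subgroup G) (σ : ↥H →* Module.End R V) (g₁ g₂ : G)
    (Φ₁ Φ₂ : G → Module.End R V)
    (h₁ : IsHeckeFun H σ Φ₁) (h₂ : IsHeckeFun H σ Φ₂)
    (hs₁ : ∀ x : G, Φ₁ x ≠ 0 → x ∈ doubleCoset H g₁)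
    (hs₂ : ∀ x : G, Φ₂ x ≠ 0 → x ∈ doubleCoset H g₂)
    (hnorm : g₁ ∈ Subgroup.normalizer (H : Set G) ∨ g₂ ∈ Subgroup.normalizer (H : Set G)) :
    (∀ x : G, heckeConv H Φ₁ Φ₂ x ≠ 0 → x ∈ doubleCoset H (g₁ * g₂)) ∧
    heckeConv H Φ₁ Φ₂ (g₁ * g₂) = Φ₁ g₁ * Φ₂ g₂ := by
  obtain ⟨heq₁, -⟩ := h₁
  obtain ⟨heq₂, -⟩ := h₂
  constructor
  · intro x hx
    have hex : ∃ c : G ⧸ H, Φ₁ (Quotient.out c) * Φ₂ ((Quotient.out c)⁻¹ * x) ≠ 0 := by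
      by_contra h
      push_neg at h
      exact hx (finsum_eq_zero_of_forall_eq_zero h)
    obtain ⟨c, hc⟩ := hex
    obtain ⟨a, ha, b, hb, hy⟩ := hs₁ _ (left_ne_zero_of_mul hc)
    obtain ⟨c', hc', d, hd, hy'⟩ := hs₂ _ (right_ne_zero_of_mul hc)
    have hx' : x = a * g₁ * (b * c') * g₂ * d := by
      have h3 : x = (a * g₁ * b) * (c' * g₂ * d) := by
        rw [← hy, ← hy']; group
      rw [h3]; group
    rcases hnorm with h | h
    · refine ⟨a * (g₁ * (b * c') * g₁⁻¹), H.mul_mem ha (normconj' h (H.mul_mem hb hc')), d, hd, ?_⟩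
      rw [hx']; group
    · refine ⟨a, ha, (g₂⁻¹ * (b * c') * g₂) * d, H.mul_mem (normconj h (H.mul_mem hb hc')) hd, ?_⟩
      rw [hx']; group
  · have hsingle : heckeConv H Φ₁ Φ₂ (g₁ * g₂)
        = Φ₁ (Quotient.out (g₁ : G ⧸ H)) * Φ₂ ((Quotient.out (g₁ : G ⧸ H))⁻¹ * (g₁ * g₂)) := by
      apply finsum_eq_single
      intro c hc
      by_contra hne
      have hmem := key hnorm (hs₁ _ (left_ne_zero_of_mul hne)) (hs₂ _ (right_ne_zero_of_mul hne))
      apply hc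
      rw [← Quotient.out_eq c]
      exact ((QuotientGroup.eq).mpr hmem).symm
    have hmem : g₁⁻¹ * Quotient.out (g₁ : G ⧸ H) ∈ H := by
      rw [← QuotientGroup.eq]
      exact (Quotient.out_eq _).symm
    set y := Quotient.out (g₁ : G ⧸ H) with hy
    set h : ↥H := ⟨g₁⁻¹ * y, hmem⟩ with hh
    have hy1 : y = (1 : ↥H) * g₁ * h := by simp [hh]
    have hy2 : y⁻¹ * (g₁ * g₂) = (h⁻¹ : ↥H) * g₂ * (1 : ↥H) := by
      simp [hh]; group
    rw [hsingle, hy2, hy1, heq₁, heq₂]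
    simp [mul_assoc, ← mul_assoc (σ h), ← map_mul]
end

section
/- For g ∈ G, the evaluation map Φ ↦ Φ(g) is an isomorphism of R-modules from H_R(G,σ)_{HgH} (functions in the Hecke algebra supported on HgH) onto the intertwining space I_g(σ) = Hom_{H ∩ H^g}(σ, σ^g). Consequently g intertwines σ if and only if some Φ ∈ H_R(G,σ) satisfies Φ(g) ≠ 0. -/
open scoped BigOperators

section Aux
variable {G R V : Type*} [Group G] [CommRing R] [AddCommGroup V] [Module R V]
  (H : Subgroup G) (σ : ↥H →* Module.End R V)

set_option linter.unusedTactic false in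
lemma hecke_wd (g : G) (f : Module.End R V)
    (hf : ∀ (x : G) (hx : x ∈ H) (hx' : g * x * g⁻¹ ∈ H),
      σ ⟨g * x * g⁻¹, hx'⟩ * f = f * σ ⟨x, hx⟩)
    (h₁ h₁' h₂ h₂' : ↥H) (heq : (h₁ : G) * g * h₁' = h₂ * g * h₂') :
    σ h₁ * f * σ h₁' = σ h₂ * f * σ h₂' := by
  set b : ↥H := h₁' * h₂'⁻¹ with hb
  set a : ↥H := h₂⁻¹ * h₁ with ha
  have habg : (a : G) * g * b = g := by
    push_cast [ha, hb]
    rw [show ((h₂:G)⁻¹ * h₁) * g * (↑h₁' * (↑h₂')⁻¹) = (h₂:G)⁻¹ * ((h₁:G) * g * h₁') * (↑h₂')⁻¹ by group,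
      heq]
    group
  have key : (g : G) * (↑b)⁻¹ * g⁻¹ = (a : G) := by
    have h2 : (a : G) = g * (↑b)⁻¹ * g⁻¹ :=
      calc (a : G) = (↑a * g * ↑b) * (↑b)⁻¹ * g⁻¹ := by group
        _ = g * (↑b)⁻¹ * g⁻¹ := by rw [habg]
    exact h2.symm
  have key' : g * ((b⁻¹ : ↥H) : G) * g⁻¹ = (a : G) := by
    rw [InvMemClass.coe_inv]; exact key
  have hx' : g * ((b⁻¹ : ↥H) : G) * g⁻¹ ∈ H := by rw [key']; exact a.2
  have h1 := hf ((b⁻¹ : ↥H) : G) (b⁻¹).2 hx'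
  have hσa : σ ⟨g * ((b⁻¹ : ↥H) : G) * g⁻¹, hx'⟩ = σ a := by
    exact congrArg σ (Subtype.ext key')
  have hσb : (σ ⟨((b⁻¹ : ↥H) : G), (b⁻¹).2⟩ : Module.End R V) = σ b⁻¹ := rfl
  rw [hσa, hσb] at h1
  -- h1 : σ a * f = f * σ b⁻¹
  have hfb : σ a * f * σ b = f := by
    rw [h1, mul_assoc, ← map_mul, inv_mul_cancel, map_one, mul_one]
  calc σ h₁ * f * σ h₁' = σ (h₂ * a) * f * σ (b * h₂') := by
        congr 2
        · congr 1; rw [ha]; group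
        · congr 1; rw [hb]; group
    _ = σ h₂ * (σ a * f * σ b) * σ h₂' := by simp only [map_mul, mul_assoc]
    _ = σ h₂ * f * σ h₂' := by rw [hfb]

open Classical in
noncomputable def heckeExt (g : G) (f : Module.End R V) : G → Module.End R V :=
  fun x => if hx : x ∈ doubleCoset H g then
    σ ⟨hx.choose, hx.choose_spec.1⟩ * f *
      σ ⟨hx.choose_spec.2.choose, hx.choose_spec.2.choose_spec.1⟩
  else 0

lemma heckeExt_eval (g : G) (f : Module.End R V)
    (hf : ∀ (x : G) (hx : x ∈ H) (hx' : g * x * g⁻¹ ∈ H),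
      σ ⟨g * x * g⁻¹, hx'⟩ * f = f * σ ⟨x, hx⟩)
    (h h' : ↥H) : heckeExt H σ g f ((h : G) * g * h') = σ h * f * σ h' := by
  classical
  have hmem : (h : G) * g * h' ∈ doubleCoset H g := ⟨h, h.2, h', h'.2, rfl⟩
  rw [heckeExt, dif_pos hmem]
  exact hecke_wd H σ g f hf ⟨hmem.choose, hmem.choose_spec.1⟩
    ⟨hmem.choose_spec.2.choose, hmem.choose_spec.2.choose_spec.1⟩ h h'
    hmem.choose_spec.2.choose_spec.2.symm

lemma heckeExt_self (g : G) (f : Module.End R V)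
    (hf : ∀ (x : G) (hx : x ∈ H) (hx' : g * x * g⁻¹ ∈ H),
      σ ⟨g * x * g⁻¹, hx'⟩ * f = f * σ ⟨x, hx⟩) :
    heckeExt H σ g f g = f := by
  have := heckeExt_eval H σ g f hf 1 1
  simpa using this

lemma eval_intertwines (g : G) (Φ : G → Module.End R V)
    (hΦ : ∀ (h h' : ↥H) (x : G), Φ (↑h * x * ↑h') = σ h * Φ x * σ h') :
    ∀ (x : G) (hx : x ∈ H) (hx' : g * x * g⁻¹ ∈ H),
      σ ⟨g * x * g⁻¹, hx'⟩ * Φ g = Φ g * σ ⟨x, hx⟩ := by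
  intro x hx hx'
  have h1 := hΦ ⟨g * x * g⁻¹, hx'⟩ 1 g
  have h2 := hΦ 1 ⟨x, hx⟩ g
  simp only [OneMemClass.coe_one, mul_one, one_mul, map_one] at h1 h2
  rw [show g * x * g⁻¹ * g = g * x by group] at h1
  rw [← h1, ← h2]

lemma doubleCoset_mul_mem (g : G) (h h' : ↥H) {x : G} (hx : x ∈ doubleCoset H g) :
    (h : G) * x * h' ∈ doubleCoset H g := by
  obtain ⟨a, ha, b, hb, rfl⟩ := hx
  exact ⟨↑h * a, mul_mem h.2 ha, b * ↑h', mul_mem hb h'.2, by group⟩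

lemma heckeExt_eq_zero (g : G) (f : Module.End R V) {x : G}
    (hx : x ∉ doubleCoset H g) : heckeExt H σ g f x = 0 := by
  simp only [heckeExt]; rw [dif_neg hx]

lemma heckeExt_support (g : G) (f : Module.End R V) {x : G}
    (hx : heckeExt H σ g f x ≠ 0) : x ∈ doubleCoset H g := by
  by_contra h
  exact hx (heckeExt_eq_zero H σ g f h)

lemma heckeExt_equivariant (g : G) (f : Module.End R V)
    (hf : ∀ (x : G) (hx : x ∈ H) (hx' : g * x * g⁻¹ ∈ H),
      σ ⟨g * x * g⁻¹, hx'⟩ * f = f * σ ⟨x, hx⟩) :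
    ∀ (h h' : ↥H) (x : G),
      heckeExt H σ g f (↑h * x * ↑h') = σ h * heckeExt H σ g f x * σ h' := by
  intro h h' x
  by_cases hx : x ∈ doubleCoset H g
  · obtain ⟨a, ha, b, hb, rfl⟩ := hx
    have e1 : ((h : G) * (a * g * b) * ↑h' : G)
        = ↑(h * ⟨a, ha⟩) * g * ↑((⟨b, hb⟩ : ↥H) * h') := by
      push_cast; group
    have e2 : heckeExt H σ g f (a * g * b) = σ ⟨a, ha⟩ * f * σ ⟨b, hb⟩ :=
      heckeExt_eval H σ g f hf ⟨a, ha⟩ ⟨b, hb⟩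
    rw [e1, heckeExt_eval H σ g f hf, e2, map_mul, map_mul]
    simp only [mul_assoc]
  · have h2 : ((h : G) * x * ↑h' : G) ∉ doubleCoset H g := by
      intro hm
      apply hx
      have := doubleCoset_mul_mem H g h⁻¹ h'⁻¹ hm
      rw [show ((h⁻¹ : ↥H) : G) * (↑h * x * ↑h') * ((h'⁻¹ : ↥H) : G) = x by
        push_cast; group] at this
      exact this
    rw [heckeExt_eq_zero H σ g f hx, heckeExt_eq_zero H σ g f h2, mul_zero, zero_mul]

end Aux

/-- For `g ∈ G`, evaluation `Φ ↦ Φ(g)` is an isomorphism of `R`-modules from the set of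
Hecke-algebra elements supported on `H g H` onto the intertwining space
`I_g(σ) = Hom_{H ∩ H^g}(σ, σ^g)`; consequently `g` intertwines `σ` iff some `Φ` in the
Hecke algebra satisfies `Φ(g) ≠ 0`. -/

theorem statement2 {G R V : Type*} [Group G] [CommRing R] [AddCommGroup V] [Module R V]
    (H : Subgroup G) (σ : ↥H →* Module.End R V) (g : G) :
    Set.BijOn (fun Φ : G → Module.End R V => Φ g)
      {Φ | IsHeckeFun H σ Φ ∧ ∀ x : G, Φ x ≠ 0 → x ∈ doubleCoset H g}
      {f : Module.End R V | ∀ (x : G) (hx : x ∈ H) (hx' : g * x * g⁻¹ ∈ H),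
        σ ⟨g * x * g⁻¹, hx'⟩ * f = f * σ ⟨x, hx⟩} ∧
    (∀ Φ₁ Φ₂ : G → Module.End R V, (Φ₁ + Φ₂) g = Φ₁ g + Φ₂ g) ∧
    (∀ (r : R) (Φ : G → Module.End R V), (r • Φ) g = r • Φ g) ∧
    ((∃ f : Module.End R V,
        (∀ (x : G) (hx : x ∈ H) (hx' : g * x * g⁻¹ ∈ H),
          σ ⟨g * x * g⁻¹, hx'⟩ * f = f * σ ⟨x, hx⟩) ∧ f ≠ 0) ↔
      ∃ Φ : G → Module.End R V, IsHeckeFun H σ Φ ∧ Φ g ≠ 0) := by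
  refine ⟨⟨?_, ?_, ?_⟩, fun _ _ => rfl, fun _ _ => rfl, ?_, ?_⟩
  · -- MapsTo
    rintro Φ ⟨⟨heqv, -⟩, -⟩
    exact eval_intertwines H σ g Φ heqv
  · -- InjOn
    rintro Φ₁ ⟨⟨heqv₁, -⟩, hs₁⟩ Φ₂ ⟨⟨heqv₂, -⟩, hs₂⟩ hval
    simp only at hval
    funext x
    by_cases hx : x ∈ doubleCoset H g
    · obtain ⟨a, ha, b, hb, rfl⟩ := hx
      have e1 := heqv₁ ⟨a, ha⟩ ⟨b, hb⟩ g
      have e2 := heqv₂ ⟨a, ha⟩ ⟨b, hb⟩ g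
      rw [show (a * g * b : G) = ↑(⟨a, ha⟩ : ↥H) * g * ↑(⟨b, hb⟩ : ↥H) from rfl,
        e1, e2, hval]
    · have h1 : Φ₁ x = 0 := by by_contra h; exact hx (hs₁ x h)
      have h2 : Φ₂ x = 0 := by by_contra h; exact hx (hs₂ x h)
      rw [h1, h2]
  · -- SurjOn
    rintro f hf
    refine ⟨heckeExt H σ g f,
      ⟨⟨heckeExt_equivariant H σ g f hf, {g}, fun y hy =>
        ⟨g, Finset.mem_singleton_self g, heckeExt_support H σ g f hy⟩⟩,
        fun y hy => heckeExt_support H σ g f hy⟩,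
      heckeExt_self H σ g f hf⟩
  · -- forward
    rintro ⟨f, hf, hne⟩
    exact ⟨heckeExt H σ g f,
      ⟨heckeExt_equivariant H σ g f hf, {g}, fun y hy =>
        ⟨g, Finset.mem_singleton_self g, heckeExt_support H σ g f hy⟩⟩,
      by rw [heckeExt_self H σ g f hf]; exact hne⟩
  · -- backward
    rintro ⟨Φ, ⟨heqv, -⟩, hne⟩
    exact ⟨Φ g, eval_intertwines H σ g Φ heqv, hne⟩
end

section
/- If V_σ is a finitely generated R-module, the map ξ: H_R(G,σ) → End_G(ind_H^G σ) given by ξ(Φ)(f)(g) = Σ_{x ∈ G/H} Φ(x) f(x⁻¹g) is an isomorphism of R-algebras, with inverse ξ⁻¹(θ)(g)(v) = θ(i_v)(g), where i_v ∈ ind_H^G σ is the function supported on H with i_v(h) = σ(h)v. -/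
open scoped BigOperators

/-- The compactly induced representation `ind_H^G σ`: functions `f : G → V` with
`f(hg) = σ(h) f(g)` whose support is contained in finitely many cosets `H s`. -/
def cind {G R V : Type*} [Group G] [CommRing R] [AddCommGroup V] [Module R V]
    (H : Subgroup G) (σ : ↥H →* Module.End R V) : Submodule R (G → V) where
  carrier := {f | (∀ (h : ↥H) (g : G), f (↑h * g) = σ h (f g)) ∧
    ∃ S : Finset G, ∀ g : G, f g ≠ 0 → ∃ s ∈ S, g * s⁻¹ ∈ H}
  add_mem' := by
    classical
    rintro f₁ f₂ ⟨e₁, S₁, hS₁⟩ ⟨e₂, S₂, hS₂⟩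
    refine ⟨fun h g => by simp [e₁, e₂], S₁ ∪ S₂, fun g hg => ?_⟩
    by_cases h1 : f₁ g = 0
    · obtain ⟨s, hs, hm⟩ := hS₂ g (fun h2 => hg (by simp [h1, h2]))
      exact ⟨s, Finset.mem_union_right _ hs, hm⟩
    · obtain ⟨s, hs, hm⟩ := hS₁ g h1
      exact ⟨s, Finset.mem_union_left _ hs, hm⟩
  zero_mem' := ⟨fun h g => by simp, ∅, fun g hg => absurd rfl hg⟩
  smul_mem' := by
    rintro r f ⟨e, S, hS⟩
    refine ⟨fun h g => by simp [e], S, fun g hg => hS g (fun h0 => hg (by simp [h0]))⟩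

/-- The map `ξ(Φ)(f)(g) = ∑_{x ∈ G/H} Φ(x) f(x⁻¹ g)`. -/
noncomputable def xiFun {G R V : Type*} [Group G] [CommRing R] [AddCommGroup V] [Module R V]
    (H : Subgroup G) (Φ : G → Module.End R V) (f : G → V) : G → V :=
  fun g => ∑ᶠ c : G ⧸ H, Φ (Quotient.out c) (f ((Quotient.out c)⁻¹ * g))

open Classical in
/-- The element `i_v` of `ind_H^G σ` supported on `H` with `i_v(h) = σ(h) v`. -/
noncomputable def ivFun {G R V : Type*} [Group G] [CommRing R] [AddCommGroup V] [Module R V]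
    (H : Subgroup G) (σ : ↥H →* Module.End R V) (v : V) : G → V :=
  fun g => if hg : g ∈ H then σ ⟨g, hg⟩ v else 0

section Helpers
variable {G R V : Type*} [Group G] [CommRing R] [AddCommGroup V] [Module R V]
variable {H : Subgroup G} {σ : ↥H →* Module.End R V}

lemma out_mk_eq (c : G ⧸ H) : (QuotientGroup.mk (Quotient.out c) : G ⧸ H) = c := Quotient.out_eq c

lemma summand_congr {Φ : G → Module.End R V} (hΦ : ∀ (k : ↥H) (x : G), Φ (x * ↑k) = Φ x * σ k)
    {f : G → V} (hf : ∀ (h : ↥H) (g : G), f (↑h * g) = σ h (f g))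
    {x y : G} (hxy : (QuotientGroup.mk x : G ⧸ H) = QuotientGroup.mk y) (g : G) :
    Φ y (f (y⁻¹ * g)) = Φ x (f (x⁻¹ * g)) := by
  rw [QuotientGroup.eq] at hxy
  have hy : y = x * ((⟨x⁻¹ * y, hxy⟩ : ↥H) : G) := by simp
  set k : ↥H := ⟨x⁻¹ * y, hxy⟩
  rw [hy, hΦ k x]
  have harg : (x * (↑k : G))⁻¹ * g = ↑k⁻¹ * (x⁻¹ * g) := by simp [mul_assoc]
  rw [harg, hf k⁻¹, Module.End.mul_apply, ← Module.End.mul_apply (σ k) (σ k⁻¹),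
    ← map_mul, mul_inv_cancel, map_one, Module.End.one_apply]

lemma finsum_translate {Φ : G → Module.End R V} (hΦ : ∀ (k : ↥H) (x : G), Φ (x * ↑k) = Φ x * σ k)
    {f : G → V} (hf : ∀ (h : ↥H) (g : G), f (↑h * g) = σ h (f g)) (a g : G) :
    ∑ᶠ c : G ⧸ H, Φ (a * Quotient.out c) (f ((a * Quotient.out c)⁻¹ * g)) =
      ∑ᶠ c : G ⧸ H, Φ (Quotient.out c) (f ((Quotient.out c)⁻¹ * g)) := by
  have key : ∀ c : G ⧸ H, Φ (a * Quotient.out c) (f ((a * Quotient.out c)⁻¹ * g)) =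
      Φ (Quotient.out (a • c)) (f ((Quotient.out (a • c))⁻¹ * g)) := by
    intro c
    refine summand_congr (σ := σ) hΦ hf (Eq.symm ?_) g
    show (QuotientGroup.mk (a * Quotient.out c) : G ⧸ H) = QuotientGroup.mk (Quotient.out (a • c))
    rw [out_mk_eq (a • c)]
    show a • (QuotientGroup.mk (Quotient.out c) : G ⧸ H) = a • c
    rw [out_mk_eq]
  calc ∑ᶠ c : G ⧸ H, Φ (a * Quotient.out c) (f ((a * Quotient.out c)⁻¹ * g))
      = ∑ᶠ c : G ⧸ H, Φ (Quotient.out (a • c)) (f ((Quotient.out (a • c))⁻¹ * g)) :=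
        finsum_congr key
    _ = ∑ᶠ c : G ⧸ H, Φ (Quotient.out c) (f ((Quotient.out c)⁻¹ * g)) :=
        finsum_comp_equiv (MulAction.toPerm a : Equiv.Perm (G ⧸ H))
          (f := fun c => Φ (Quotient.out c) (f ((Quotient.out c)⁻¹ * g)))

lemma xi_eq_sum (Φ : G → Module.End R V) (f : G → V) (g : G) (C : Finset (G ⧸ H))
    (hC : ∀ c : G ⧸ H, Φ (Quotient.out c) ≠ 0 → c ∈ C) :
    xiFun H Φ f g = ∑ c ∈ C, Φ (Quotient.out c) (f ((Quotient.out c)⁻¹ * g)) := by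
  refine finsum_eq_sum_of_support_subset _ fun c hc => hC c fun h0 => hc ?_
  simp [Function.mem_support, h0]

/-- A finset of `G ⧸ H` containing the coset support of a Hecke function. -/
lemma hecke_supp {Φ : G → Module.End R V}
    (hfin : ∀ g : G, ((fun x : G => (QuotientGroup.mk x : G ⧸ H)) '' doubleCoset H g).Finite)
    (hΦ : ∃ S : Finset G, ∀ g : G, Φ g ≠ 0 → ∃ s ∈ S, g ∈ doubleCoset H s) :
    ∃ C : Finset (G ⧸ H), ∀ c : G ⧸ H, Φ (Quotient.out c) ≠ 0 → c ∈ C := by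
  classical
  obtain ⟨S, hS⟩ := hΦ
  refine ⟨S.biUnion fun s => (hfin s).toFinset, fun c hc => ?_⟩
  obtain ⟨s, hs, hm⟩ := hS _ hc
  exact Finset.mem_biUnion.2 ⟨s, hs, (Set.Finite.mem_toFinset _).2 ⟨_, hm, out_mk_eq c⟩⟩

lemma heckeR {Φ : G → Module.End R V}
    (hΦ : ∀ (h h' : ↥H) (g : G), Φ (↑h * g * ↑h') = σ h * Φ g * σ h') :
    ∀ (k : ↥H) (x : G), Φ (x * ↑k) = Φ x * σ k := fun k x => by simpa using hΦ 1 k x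

lemma heckeL {Φ : G → Module.End R V}
    (hΦ : ∀ (h h' : ↥H) (g : G), Φ (↑h * g * ↑h') = σ h * Φ g * σ h') :
    ∀ (h : ↥H) (x : G), Φ (↑h * x) = σ h * Φ x := fun h x => by simpa using hΦ h 1 x

lemma iv_mem (v : V) : ivFun H σ v ∈ cind H σ := by
  classical
  constructor
  · intro h g
    by_cases hg : g ∈ H
    · have hhg : (↑h : G) * g ∈ H := mul_mem h.2 hg
      have : (⟨↑h * g, hhg⟩ : ↥H) = h * ⟨g, hg⟩ := rfl
      simp only [ivFun, dif_pos hg, dif_pos hhg, this, map_mul, Module.End.mul_apply]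
    · have hhg : (↑h : G) * g ∉ H := fun hc => hg (by
        have : g = (↑h)⁻¹ * (↑h * g) := by group
        rw [this]; exact mul_mem (inv_mem h.2) hc)
      simp only [ivFun, dif_neg hg, dif_neg hhg, map_zero]
  · exact ⟨{1}, fun g hg => ⟨1, Finset.mem_singleton_self 1, by
      classical
      by_contra hgH
      exact hg (by simp only [ivFun]; rw [dif_neg (by simpa using hgH)])⟩⟩

lemma iv_add (v w : V) : ivFun H σ (v + w) = ivFun H σ v + ivFun H σ w := by
  classical
  funext g
  by_cases hg : g ∈ H <;> simp [ivFun, hg]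

lemma iv_smul (r : R) (v : V) : ivFun H σ (r • v) = r • ivFun H σ v := by
  classical
  funext g
  by_cases hg : g ∈ H <;> simp [ivFun, hg]

lemma xi_iv {Φ : G → Module.End R V}
    (hΦr : ∀ (k : ↥H) (x : G), Φ (x * ↑k) = Φ x * σ k) (v : V) (g : G) :
    xiFun H Φ (ivFun H σ v) g = Φ g v := by
  classical
  have hz : ∀ c : G ⧸ H, c ≠ QuotientGroup.mk g →
      Φ (Quotient.out c) (ivFun H σ v ((Quotient.out c)⁻¹ * g)) = 0 := by
    intro c hc
    have hnot : (Quotient.out c)⁻¹ * g ∉ H := by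
      intro hmem
      exact hc (by rw [← out_mk_eq c, QuotientGroup.eq.2 hmem])
    simp only [ivFun, dif_neg hnot, map_zero]
  rw [xiFun, finsum_eq_single _ (QuotientGroup.mk g) hz]
  have hk : (Quotient.out (QuotientGroup.mk g : G ⧸ H))⁻¹ * g ∈ H := by
    rw [← QuotientGroup.eq]; exact out_mk_eq _
  simp only [ivFun, dif_pos hk]
  rw [← Module.End.mul_apply, ← hΦr ⟨_, hk⟩]
  congr 1
  simp

lemma cind_translate {F : G → V} (hF : F ∈ cind H σ) (x : G) :
    (fun g => F (g * x)) ∈ cind H σ := by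
  classical
  obtain ⟨he, S, hS⟩ := hF
  constructor
  · intro h g
    have : (↑h : G) * g * x = ↑h * (g * x) := by group
    simp only [this, he]
  · refine ⟨S.image (fun s => s * x⁻¹), fun g hg => ?_⟩
    obtain ⟨s, hs, hm⟩ := hS (g * x) hg
    refine ⟨s * x⁻¹, Finset.mem_image_of_mem _ hs, ?_⟩
    have : g * (s * x⁻¹)⁻¹ = g * x * s⁻¹ := by group
    rw [this]; exact hm

end Helpers

/-- If `V_σ` is finitely generated, `ξ : H_R(G,σ) → End_G(ind_H^G σ)`,
`ξ(Φ)(f)(g) = ∑_{x ∈ G/H} Φ(x) f(x⁻¹g)`, is an isomorphism of `R`-algebras, with inverse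
`ξ⁻¹(θ)(g)(v) = θ(i_v)(g)`. -/
theorem statement3 {G R V : Type*} [Group G] [TopologicalSpace G] [IsTopologicalGroup G]
    [CommRing R] [AddCommGroup V] [Module R V] [Module.Finite R V]
    (H : Subgroup G) (hHopen : IsOpen (H : Set G))
    (hfin : ∀ g : G, ((fun x : G => (QuotientGroup.mk x : G ⧸ H)) '' doubleCoset H g).Finite)
    (σ : ↥H →* Module.End R V)
    (hsmooth : ∀ v : V, IsOpen {h : ↥H | σ h v = v}) :
    -- `ξ(Φ)` preserves `ind_H^G σ`
    (∀ Φ, IsHeckeFun H σ Φ → ∀ f ∈ cind H σ, xiFun H Φ f ∈ cind H σ) ∧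
    -- `ξ(Φ)` is `G`-equivariant
    (∀ Φ, IsHeckeFun H σ Φ → ∀ f ∈ cind H σ, ∀ x : G,
        xiFun H Φ (fun g => f (g * x)) = fun g => xiFun H Φ f (g * x)) ∧
    -- `ξ(Φ)` is `R`-linear on `ind_H^G σ`
    (∀ Φ, IsHeckeFun H σ Φ → ∀ f₁ ∈ cind H σ, ∀ f₂ ∈ cind H σ,
        xiFun H Φ (f₁ + f₂) = xiFun H Φ f₁ + xiFun H Φ f₂) ∧
    (∀ Φ, IsHeckeFun H σ Φ → ∀ f ∈ cind H σ, ∀ r : R,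
        xiFun H Φ (r • f) = r • xiFun H Φ f) ∧
    -- `ξ` is an `R`-algebra homomorphism
    (∀ Φ₁ Φ₂, IsHeckeFun H σ Φ₁ → IsHeckeFun H σ Φ₂ → ∀ f ∈ cind H σ,
        xiFun H (heckeConv H Φ₁ Φ₂) f = xiFun H Φ₁ (xiFun H Φ₂ f)) ∧
    (∀ Φ₁ Φ₂, IsHeckeFun H σ Φ₁ → IsHeckeFun H σ Φ₂ → ∀ f ∈ cind H σ,
        xiFun H (Φ₁ + Φ₂) f = xiFun H Φ₁ f + xiFun H Φ₂ f) ∧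
    (∀ Φ, IsHeckeFun H σ Φ → ∀ f ∈ cind H σ, ∀ r : R,
        xiFun H (r • Φ) f = r • xiFun H Φ f) ∧
    (∀ f ∈ cind H σ, xiFun H (heckeUnit H σ) f = f) ∧
    -- `ξ` is injective
    (∀ Φ₁ Φ₂, IsHeckeFun H σ Φ₁ → IsHeckeFun H σ Φ₂ →
        (∀ f ∈ cind H σ, xiFun H Φ₁ f = xiFun H Φ₂ f) → Φ₁ = Φ₂) ∧
    -- `ξ` is surjective onto `End_G(ind_H^G σ)`, with inverse `θ ↦ (g ↦ (v ↦ θ(i_v)(g)))`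
    (∀ θ : ↥(cind H σ) →ₗ[R] ↥(cind H σ),
        (∀ (x : G) (f f' : ↥(cind H σ)), (∀ g : G, (f' : G → V) g = (f : G → V) (g * x)) →
          ∀ g : G, (↑(θ f') : G → V) g = (↑(θ f) : G → V) (g * x)) →
        ∃ Φ, IsHeckeFun H σ Φ ∧
          (∀ (f : ↥(cind H σ)) (g : G), (↑(θ f) : G → V) g = xiFun H Φ (↑f) g) ∧
          (∀ (g : G) (v : V) (f : ↥(cind H σ)),
            (f : G → V) = ivFun H σ v → Φ g v = (↑(θ f) : G → V) g)) := by
  classical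
  refine ⟨?p1, ?p2, ?p3, ?p4, ?p5, ?p6, ?p7, ?p8, ?p9, ?p10⟩
  case p1 =>
    intro Φ hΦ f hf
    obtain ⟨hfe, Sf, hSf⟩ := hf
    have hΦr := heckeR (σ := σ) hΦ.1
    have hΦl := heckeL (σ := σ) hΦ.1
    obtain ⟨C, hC⟩ := hecke_supp hfin hΦ.2
    constructor
    · intro h g
      have step1 : xiFun H Φ f (↑h * g) =
          ∑ᶠ c : G ⧸ H, Φ (↑h * Quotient.out c) (f ((↑h * Quotient.out c)⁻¹ * (↑h * g))) := by
        simp only [xiFun]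
        exact (finsum_translate hΦr hfe ((↑h : G)) ((↑h : G) * g)).symm
      have step2 : ∀ c : G ⧸ H, Φ (↑h * Quotient.out c) (f ((↑h * Quotient.out c)⁻¹ * (↑h * g)))
          = σ h (Φ (Quotient.out c) (f ((Quotient.out c)⁻¹ * g))) := by
        intro c
        have harg : ((↑h : G) * Quotient.out c)⁻¹ * (↑h * g) = (Quotient.out c)⁻¹ * g := by
          group
        rw [harg, hΦl h, Module.End.mul_apply]
      have hsupp : (Function.support
          (fun c : G ⧸ H => Φ (Quotient.out c) (f ((Quotient.out c)⁻¹ * g)))).Finite := by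
        refine Set.Finite.subset C.finite_toSet fun c hc => hC c fun h0 => hc ?_
        simp [Function.mem_support, h0]
      rw [step1, finsum_congr step2]
      exact ((σ h).toAddMonoidHom.map_finsum hsupp).symm
    · refine ⟨C.biUnion (fun c => Sf.biUnion (fun s =>
        ((hfin (Quotient.out c)⁻¹).toFinset.image (fun q => (Quotient.out q)⁻¹ * s)))),
        fun g hg => ?_⟩
      have hex : ∃ c : G ⧸ H, Φ (Quotient.out c) (f ((Quotient.out c)⁻¹ * g)) ≠ 0 := by
        by_contra hall
        push_neg at hall
        exact hg (finsum_eq_zero_of_forall_eq_zero hall)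
      obtain ⟨c, hcne⟩ := hex
      have hΦne : Φ (Quotient.out c) ≠ 0 := fun h0 => hcne (by simp [h0])
      have hfne : f ((Quotient.out c)⁻¹ * g) ≠ 0 := fun h0 => hcne (by simp [h0])
      obtain ⟨s, hs, hmem⟩ := hSf _ hfne
      set x := Quotient.out c with hx
      have h0 : x⁻¹ * g * s⁻¹ ∈ H := by
        have : x⁻¹ * g * s⁻¹ = (x⁻¹ * g) * s⁻¹ := by group
        rw [this]; exact hmem
      have hu : (x⁻¹ * g * s⁻¹)⁻¹ * x⁻¹ ∈ doubleCoset H x⁻¹ :=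
        ⟨(x⁻¹ * g * s⁻¹)⁻¹, inv_mem h0, 1, one_mem H, by group⟩
      set q : G ⧸ H := QuotientGroup.mk ((x⁻¹ * g * s⁻¹)⁻¹ * x⁻¹) with hq
      have hqmem : q ∈ (hfin x⁻¹).toFinset :=
        (Set.Finite.mem_toFinset _).2 ⟨_, hu, rfl⟩
      set z := Quotient.out q with hz
      have hzu : z⁻¹ * ((x⁻¹ * g * s⁻¹)⁻¹ * x⁻¹) ∈ H :=
        QuotientGroup.eq.1 (out_mk_eq q)
      refine ⟨z⁻¹ * s, ?_, ?_⟩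
      · refine Finset.mem_biUnion.2 ⟨c, hC c hΦne, Finset.mem_biUnion.2 ⟨s, hs, ?_⟩⟩
        exact Finset.mem_image.2 ⟨q, hqmem, rfl⟩
      · have : g * (z⁻¹ * s)⁻¹ = (z⁻¹ * ((x⁻¹ * g * s⁻¹)⁻¹ * x⁻¹))⁻¹ := by group
        rw [this]
        exact inv_mem hzu
  case p2 =>
    intro Φ hΦ f hf x
    funext g
    simp only [xiFun, mul_assoc]
  case p3 =>
    intro Φ hΦ f₁ _ f₂ _
    funext g
    obtain ⟨C, hC⟩ := hecke_supp hfin hΦ.2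
    rw [Pi.add_apply, xi_eq_sum Φ (f₁ + f₂) g C hC, xi_eq_sum Φ f₁ g C hC,
      xi_eq_sum Φ f₂ g C hC, ← Finset.sum_add_distrib]
    exact Finset.sum_congr rfl fun c _ => by simp
  case p4 =>
    intro Φ hΦ f _ r
    funext g
    obtain ⟨C, hC⟩ := hecke_supp hfin hΦ.2
    rw [Pi.smul_apply, xi_eq_sum Φ (r • f) g C hC, xi_eq_sum Φ f g C hC, Finset.smul_sum]
    exact Finset.sum_congr rfl fun c _ => by simp
  case p5 =>
    intro Φ₁ Φ₂ hΦ₁ hΦ₂ f hf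
    obtain ⟨hfe, Sf, hSf⟩ := hf
    have hΦ₂r := heckeR (σ := σ) hΦ₂.1
    obtain ⟨C₁, hC₁⟩ := hecke_supp hfin hΦ₁.2
    obtain ⟨S₂, hS₂⟩ := hΦ₂.2
    funext g
    set C₅ : Finset (G ⧸ H) := C₁.biUnion (fun d => S₂.biUnion (fun s =>
      (hfin s).toFinset.image (fun q => Quotient.out d • q))) with hC₅
    have hkey : ∀ d ∈ C₁, ∀ c : G ⧸ H,
        Φ₂ ((Quotient.out d)⁻¹ * Quotient.out c) ≠ 0 → c ∈ C₅ := by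
      intro d hd c hne
      obtain ⟨s, hs, hmem⟩ := hS₂ _ hne
      refine Finset.mem_biUnion.2 ⟨d, hd, Finset.mem_biUnion.2 ⟨s, hs, Finset.mem_image.2
        ⟨QuotientGroup.mk ((Quotient.out d)⁻¹ * Quotient.out c),
         (Set.Finite.mem_toFinset _).2 ⟨_, hmem, rfl⟩, ?_⟩⟩⟩
      show QuotientGroup.mk (Quotient.out d * ((Quotient.out d)⁻¹ * Quotient.out c)) = c
      rw [mul_inv_cancel_left, out_mk_eq]
    have hconv : ∀ x : G, heckeConv H Φ₁ Φ₂ x =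
        ∑ d ∈ C₁, Φ₁ (Quotient.out d) * Φ₂ ((Quotient.out d)⁻¹ * x) := by
      intro x
      refine finsum_eq_sum_of_support_subset _ fun d hd => ?_
      refine hC₁ d fun h0 => hd ?_
      simp [Function.mem_support, h0]
    have hLS : ∀ c : G ⧸ H, heckeConv H Φ₁ Φ₂ (Quotient.out c) ≠ 0 → c ∈ C₅ := by
      intro c hc
      rw [hconv] at hc
      obtain ⟨d, hd, hdne⟩ := Finset.exists_ne_zero_of_sum_ne_zero hc
      refine hkey d hd c fun h0 => hdne ?_
      rw [h0, mul_zero]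
    rw [xi_eq_sum _ f g C₅ hLS, xi_eq_sum Φ₁ _ g C₁ hC₁]
    have lhs_eq : ∀ c ∈ C₅, heckeConv H Φ₁ Φ₂ (Quotient.out c) (f ((Quotient.out c)⁻¹ * g)) =
        ∑ d ∈ C₁, Φ₁ (Quotient.out d) (Φ₂ ((Quotient.out d)⁻¹ * Quotient.out c)
          (f ((Quotient.out c)⁻¹ * g))) := by
      intro c _
      rw [hconv, LinearMap.sum_apply]
      exact Finset.sum_congr rfl fun d _ => by rw [Module.End.mul_apply]
    rw [Finset.sum_congr rfl lhs_eq, Finset.sum_comm]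
    refine Finset.sum_congr rfl fun d hd => ?_
    have hΦ' : ∀ (k : ↥H) (x : G),
        Φ₂ ((Quotient.out d)⁻¹ * (x * ↑k)) = Φ₂ ((Quotient.out d)⁻¹ * x) * σ k := by
      intro k x
      rw [← mul_assoc]
      exact hΦ₂r k _
    have htr := finsum_translate (Φ := fun x => Φ₂ ((Quotient.out d)⁻¹ * x)) hΦ' hfe
      (Quotient.out d) g
    have inner : xiFun H Φ₂ f ((Quotient.out d)⁻¹ * g) =
        ∑ᶠ c : G ⧸ H, Φ₂ ((Quotient.out d)⁻¹ * Quotient.out c) (f ((Quotient.out c)⁻¹ * g)) := by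
      rw [← htr]
      simp only [xiFun]
      refine finsum_congr fun c => ?_
      have h1 : (Quotient.out d)⁻¹ * (Quotient.out d * Quotient.out c) = Quotient.out c := by
        group
      have h2 : (Quotient.out d * Quotient.out c)⁻¹ * g =
          (Quotient.out c)⁻¹ * ((Quotient.out d)⁻¹ * g) := by group
      rw [h1, h2]
    have inner2 : xiFun H Φ₂ f ((Quotient.out d)⁻¹ * g) =
        ∑ c ∈ C₅, Φ₂ ((Quotient.out d)⁻¹ * Quotient.out c) (f ((Quotient.out c)⁻¹ * g)) := by
      rw [inner]
      refine finsum_eq_sum_of_support_subset _ fun c hc => ?_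
      refine hkey d hd c fun h0 => hc ?_
      simp [Function.mem_support, h0]
    rw [inner2, map_sum]
  case p6 =>
    intro Φ₁ Φ₂ hΦ₁ hΦ₂ f _
    funext g
    obtain ⟨C₁, hC₁⟩ := hecke_supp hfin hΦ₁.2
    obtain ⟨C₂, hC₂⟩ := hecke_supp hfin hΦ₂.2
    have hS : ∀ c : G ⧸ H, (Φ₁ + Φ₂) (Quotient.out c) ≠ 0 → c ∈ C₁ ∪ C₂ := by
      intro c hc
      by_cases h1 : Φ₁ (Quotient.out c) = 0
      · refine Finset.mem_union_right _ (hC₂ c fun h2 => hc ?_)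
        simp [Pi.add_apply, h1, h2]
      · exact Finset.mem_union_left _ (hC₁ c h1)
    rw [Pi.add_apply, xi_eq_sum (Φ₁ + Φ₂) f g (C₁ ∪ C₂) hS,
      xi_eq_sum Φ₁ f g (C₁ ∪ C₂) (fun c hc => Finset.mem_union_left _ (hC₁ c hc)),
      xi_eq_sum Φ₂ f g (C₁ ∪ C₂) (fun c hc => Finset.mem_union_right _ (hC₂ c hc)),
      ← Finset.sum_add_distrib]
    exact Finset.sum_congr rfl fun c _ => by simp
  case p7 =>
    intro Φ hΦ f _ r
    funext g
    obtain ⟨C, hC⟩ := hecke_supp hfin hΦ.2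
    have hS : ∀ c : G ⧸ H, (r • Φ) (Quotient.out c) ≠ 0 → c ∈ C := by
      intro c hc
      refine hC c fun h0 => hc ?_
      simp [Pi.smul_apply, h0]
    rw [Pi.smul_apply, xi_eq_sum (r • Φ) f g C hS, xi_eq_sum Φ f g C hC, Finset.smul_sum]
    exact Finset.sum_congr rfl fun c _ => by simp
  case p8 =>
    rintro f ⟨hfe, -⟩
    funext g
    have hz : ∀ c : G ⧸ H, c ≠ (QuotientGroup.mk 1 : G ⧸ H) →
        heckeUnit H σ (Quotient.out c) (f ((Quotient.out c)⁻¹ * g)) = 0 := by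
      intro c hc
      have hnot : Quotient.out c ∉ H := by
        intro hmem
        refine hc ?_
        rw [← out_mk_eq c]
        exact QuotientGroup.eq.2 (by simpa using inv_mem hmem)
      simp [heckeUnit, dif_neg hnot]
    rw [xiFun, finsum_eq_single _ (QuotientGroup.mk 1) hz]
    have he : Quotient.out (QuotientGroup.mk 1 : G ⧸ H) ∈ H := by
      have := QuotientGroup.eq.1 (out_mk_eq (QuotientGroup.mk 1 : G ⧸ H)).symm
      simpa using this
    simp only [heckeUnit, dif_pos he]
    have harg : (Quotient.out (QuotientGroup.mk 1 : G ⧸ H))⁻¹ * g =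
        ↑((⟨_, he⟩ : ↥H)⁻¹) * g := rfl
    rw [harg, hfe, ← Module.End.mul_apply, ← map_mul, mul_inv_cancel, map_one,
      Module.End.one_apply]
  case p9 =>
    intro Φ₁ Φ₂ hΦ₁ hΦ₂ hxi
    funext g
    refine LinearMap.ext fun v => ?_
    have h1 := xi_iv (σ := σ) (heckeR hΦ₁.1) v g
    have h2 := xi_iv (σ := σ) (heckeR hΦ₂.1) v g
    rw [← h1, ← h2, hxi _ (iv_mem v)]
  case p10 =>
    intro θ hθ
    set ivc : V → ↥(cind H σ) := fun v => ⟨ivFun H σ v, iv_mem v⟩ with hivc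
    have ivc_add : ∀ v w, ivc (v + w) = ivc v + ivc w := fun v w =>
      Subtype.ext (iv_add v w)
    have ivc_smul : ∀ (r : R) (v : V), ivc (r • v) = r • ivc v := fun r v =>
      Subtype.ext (iv_smul r v)
    set Φ : G → Module.End R V := fun g =>
      { toFun := fun v => (↑(θ (ivc v)) : G → V) g
        map_add' := fun v w => by
          show (↑(θ (ivc (v + w))) : G → V) g = (↑(θ (ivc v)) : G → V) g + (↑(θ (ivc w)) : G → V) g
          rw [ivc_add, map_add]; rfl
        map_smul' := fun r v => by
          show (↑(θ (ivc (r • v))) : G → V) g = r • (↑(θ (ivc v)) : G → V) g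
          rw [ivc_smul, map_smul]; rfl } with hΦdef
    have hl : ∀ (h : ↥H) (g : G) (v : V), Φ (↑h * g) v = σ h (Φ g v) := fun h g v =>
      (θ (ivc v)).2.1 h g
    have hr : ∀ (k : ↥H) (g : G) (v : V), Φ (g * ↑k) v = Φ g (σ k v) := by
      intro k g v
      have hiv : ∀ x : G, (↑(ivc (σ k v)) : G → V) x = (↑(ivc v) : G → V) (x * ↑k) := by
        intro x
        show ivFun H σ (σ k v) x = ivFun H σ v (x * ↑k)
        by_cases hx : x ∈ H
        · have hxk : x * ↑k ∈ H := mul_mem hx k.2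
          have hxe : (⟨x * ↑k, hxk⟩ : ↥H) = ⟨x, hx⟩ * k := rfl
          simp only [ivFun, dif_pos hx, dif_pos hxk, hxe, map_mul, Module.End.mul_apply]
        · have hxk : x * ↑k ∉ H := fun hc => hx (by
            have hx' : x = (x * ↑k) * (↑k)⁻¹ := by group
            rw [hx']; exact mul_mem hc (inv_mem k.2))
          simp only [ivFun, dif_neg hx, dif_neg hxk]
      have happ := hθ (↑k) (ivc v) (ivc (σ k v)) hiv g
      exact happ.symm
    have hhecke : ∀ (h h' : ↥H) (g : G), Φ (↑h * g * ↑h') = σ h * Φ g * σ h' := by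
      intro h h' g
      refine LinearMap.ext fun v => ?_
      have h1 : (↑h : G) * g * ↑h' = ↑h * (g * ↑h') := by group
      rw [h1]
      calc Φ (↑h * (g * ↑h')) v = σ h (Φ (g * ↑h') v) := hl h _ v
        _ = σ h (Φ g (σ h' v)) := by rw [hr h' g v]
        _ = (σ h * Φ g * σ h') v := by simp [Module.End.mul_apply]
    choose T hT using fun w : V => (θ (ivc w)).2.2
    obtain ⟨sV, hsV⟩ := Module.Finite.fg_top (R := R) (M := V)
    have hsupp : ∃ S : Finset G, ∀ g : G, Φ g ≠ 0 → ∃ s ∈ S, g ∈ doubleCoset H s := by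
      refine ⟨sV.biUnion T, fun g hg => ?_⟩
      have hex : ∃ w ∈ sV, Φ g w ≠ 0 := by
        by_contra hall
        push_neg at hall
        refine hg (LinearMap.ext fun v => ?_)
        have hv : v ∈ Submodule.span R (↑sV : Set V) := hsV ▸ Submodule.mem_top
        have hle : Submodule.span R (↑sV : Set V) ≤ LinearMap.ker (Φ g) :=
          Submodule.span_le.2 fun w hw => LinearMap.mem_ker.2 (hall w hw)
        simpa using hle hv
      obtain ⟨w, hw, hne⟩ := hex
      obtain ⟨s, hs, hmem⟩ := hT w g hne
      exact ⟨s, Finset.mem_biUnion.2 ⟨w, hw, hs⟩, ⟨g * s⁻¹, hmem, 1, one_mem H, by group⟩⟩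
    refine ⟨Φ, ⟨hhecke, hsupp⟩, ?_, ?_⟩
    · -- main: θ f g = xiFun H Φ f g
      intro f g
      obtain ⟨hfe, Sf, hSf⟩ := f.2
      set T' : Finset G := Sf.image (fun s => (Quotient.out (QuotientGroup.mk s⁻¹ : G ⧸ H))⁻¹)
        with hT'
      have hcanon : ∀ t ∈ T', Quotient.out (QuotientGroup.mk t⁻¹ : G ⧸ H) = t⁻¹ := by
        intro t ht
        obtain ⟨s, _, rfl⟩ := Finset.mem_image.1 ht
        rw [inv_inv, out_mk_eq]
      have hsep : ∀ t₁ ∈ T', ∀ t₂ ∈ T', t₁ * t₂⁻¹ ∈ H → t₁ = t₂ := by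
        intro t₁ h₁ t₂ h₂ hmem
        have e1 := hcanon t₁ h₁
        have e2 := hcanon t₂ h₂
        have heq : (QuotientGroup.mk t₁⁻¹ : G ⧸ H) = QuotientGroup.mk t₂⁻¹ :=
          QuotientGroup.eq.2 (by simpa using hmem)
        calc t₁ = (Quotient.out (QuotientGroup.mk t₁⁻¹ : G ⧸ H))⁻¹ := by rw [e1, inv_inv]
          _ = (Quotient.out (QuotientGroup.mk t₂⁻¹ : G ⧸ H))⁻¹ := by rw [heq]
          _ = t₂ := by rw [e2, inv_inv]
      have hcover : ∀ g' : G, (↑f : G → V) g' ≠ 0 → ∃ t ∈ T', g' * t⁻¹ ∈ H := by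
        intro g' hne
        obtain ⟨s, hs, hmem⟩ := hSf g' hne
        refine ⟨(Quotient.out (QuotientGroup.mk s⁻¹ : G ⧸ H))⁻¹,
          Finset.mem_image_of_mem _ hs, ?_⟩
        have hst : s * ((Quotient.out (QuotientGroup.mk s⁻¹ : G ⧸ H))⁻¹)⁻¹ ∈ H := by
          have h' := QuotientGroup.eq.1 (out_mk_eq (QuotientGroup.mk s⁻¹ : G ⧸ H)).symm
          simpa using h'
        have hsplit : g' * ((Quotient.out (QuotientGroup.mk s⁻¹ : G ⧸ H))⁻¹)⁻¹ =
            (g' * s⁻¹) * (s * ((Quotient.out (QuotientGroup.mk s⁻¹ : G ⧸ H))⁻¹)⁻¹) := by group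
        rw [hsplit]
        exact mul_mem hmem hst
      have hval : ∀ (t g' : G) (hm : g' * t⁻¹ ∈ H),
          ivFun H σ ((↑f : G → V) t) (g' * t⁻¹) = (↑f : G → V) g' := by
        intro t g' hm
        have h' : (↑f : G → V) g' = σ ⟨g' * t⁻¹, hm⟩ ((↑f : G → V) t) := by
          rw [← hfe ⟨g' * t⁻¹, hm⟩ t]
          have harg : (↑(⟨g' * t⁻¹, hm⟩ : ↥H) : G) * t = g' := by
            show g' * t⁻¹ * t = g'
            group
          rw [harg]
        simp only [ivFun, dif_pos hm]
        exact h'.symm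
      set φ : G → ↥(cind H σ) := fun t => ⟨fun g' => ivFun H σ ((↑f : G → V) t) (g' * t⁻¹),
        cind_translate (iv_mem _) t⁻¹⟩ with hφ
      have hdecomp : (f : ↥(cind H σ)) = ∑ t ∈ T', φ t := by
        refine Subtype.ext ?_
        have hcoe : (↑(∑ t ∈ T', φ t) : G → V) = ∑ t ∈ T', (↑(φ t) : G → V) :=
          map_sum ((cind H σ).subtype) φ T'
        rw [hcoe]
        funext g'
        rw [Finset.sum_apply]
        by_cases h0 : (↑f : G → V) g' = 0
        · rw [h0]
          refine (Finset.sum_eq_zero fun t ht => ?_).symm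
          show ivFun H σ ((↑f : G → V) t) (g' * t⁻¹) = 0
          by_cases hm : g' * t⁻¹ ∈ H
          · rw [hval t g' hm, h0]
          · simp [ivFun, dif_neg hm]
        · obtain ⟨t₀, ht₀, hm₀⟩ := hcover g' h0
          rw [Finset.sum_eq_single_of_mem t₀ ht₀ ?_]
          · exact (hval t₀ g' hm₀).symm
          · intro t ht hne
            show ivFun H σ ((↑f : G → V) t) (g' * t⁻¹) = 0
            by_cases hm : g' * t⁻¹ ∈ H
            · exfalso
              refine hne (hsep t ht t₀ ht₀ ?_)
              have h'' : t * t₀⁻¹ = (g' * t⁻¹)⁻¹ * (g' * t₀⁻¹) := by group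
              rw [h'']
              exact mul_mem (inv_mem hm) hm₀
            · simp [ivFun, dif_neg hm]
      have hstep : ∀ t ∈ T', (↑(θ (φ t)) : G → V) g = Φ (g * t⁻¹) ((↑f : G → V) t) := by
        intro t _
        exact hθ t⁻¹ (ivc ((↑f : G → V) t)) (φ t) (fun g' => rfl) g
      have hθf : (↑(θ f) : G → V) g = ∑ t ∈ T', Φ (g * t⁻¹) ((↑f : G → V) t) := by
        have hsum : θ f = ∑ t ∈ T', θ (φ t) := by rw [hdecomp, map_sum]
        have hcoe2 : (↑(∑ t ∈ T', θ (φ t)) : G → V) = ∑ t ∈ T', (↑(θ (φ t)) : G → V) :=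
          map_sum ((cind H σ).subtype) _ T'
        rw [hsum, hcoe2, Finset.sum_apply]
        exact Finset.sum_congr rfl hstep
      have hΦr' := heckeR (σ := σ) hhecke
      have hsub : ∀ c : G ⧸ H,
          Φ (Quotient.out c) ((↑f : G → V) ((Quotient.out c)⁻¹ * g)) ≠ 0 →
          c ∈ T'.image (fun t => (QuotientGroup.mk (g * t⁻¹) : G ⧸ H)) := by
        intro c hc
        have hfne : (↑f : G → V) ((Quotient.out c)⁻¹ * g) ≠ 0 := fun h0 => hc (by simp [h0])
        obtain ⟨t, ht, hm⟩ := hcover _ hfne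
        refine Finset.mem_image.2 ⟨t, ht, ?_⟩
        have hmem : (Quotient.out c)⁻¹ * (g * t⁻¹) ∈ H := by
          have h' : (Quotient.out c)⁻¹ * (g * t⁻¹) = ((Quotient.out c)⁻¹ * g) * t⁻¹ := by group
          rw [h']
          exact hm
        have h2 : (QuotientGroup.mk (Quotient.out c) : G ⧸ H) = QuotientGroup.mk (g * t⁻¹) :=
          QuotientGroup.eq.2 hmem
        rw [out_mk_eq c] at h2
        exact h2.symm
      have hxi : xiFun H Φ (↑f) g =
          ∑ c ∈ T'.image (fun t => (QuotientGroup.mk (g * t⁻¹) : G ⧸ H)),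
            Φ (Quotient.out c) ((↑f : G → V) ((Quotient.out c)⁻¹ * g)) :=
        finsum_eq_sum_of_support_subset _ (fun c hc => hsub c hc)
      have hinj : ∀ t₁ ∈ T', ∀ t₂ ∈ T',
          (QuotientGroup.mk (g * t₁⁻¹) : G ⧸ H) = QuotientGroup.mk (g * t₂⁻¹) → t₁ = t₂ := by
        intro t₁ h₁ t₂ h₂ he
        refine hsep t₁ h₁ t₂ h₂ ?_
        have h'' : t₁ * t₂⁻¹ = (g * t₁⁻¹)⁻¹ * (g * t₂⁻¹) := by group
        rw [h'']
        exact QuotientGroup.eq.1 he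
      rw [hθf, hxi, Finset.sum_image hinj]
      refine Finset.sum_congr rfl fun t _ => ?_
      have hc := summand_congr (σ := σ) hΦr' hfe
        (out_mk_eq (QuotientGroup.mk (g * t⁻¹) : G ⧸ H)).symm g
      rw [hc]
      have harg2 : (g * t⁻¹)⁻¹ * g = t := by group
      rw [harg2]
    · intro g v f hfv
      have hfe : f = ivc v := Subtype.ext hfv
      rw [hfe]
      rfl
end

section
/- Let ζ: H_R(G,η) → H_R(G,η_P) be given by ζ(Φ) = μ∘Φ, where μ(f) = p∘f∘ι, p: V_η → V_M the canonical projection onto the subspace of functions supported in J¹_P and ι the inclusion, for the identification V_η ≅ ind_{J¹_P}^{J¹}(η_P). Then ζ is an injective homomorphism of R-algebras. -/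
open scoped BigOperators

open scoped Pointwise

lemma aux_coset_finite {G : Type*} [Group G] [TopologicalSpace G] [IsTopologicalGroup G]
    (H : Subgroup G) (hH : IsOpen (H : Set G)) {K : Set G} (hK : IsCompact K) :
    {c : G ⧸ H | Quotient.out c ∈ K}.Finite := by
  obtain ⟨t, ht⟩ := hK.elim_finite_subcover (fun x : G => x • (H : Set G))
    (fun x => hH.smul x)
    (fun k hk => Set.mem_iUnion.2 ⟨k, ⟨1, H.one_mem, mul_one k⟩⟩)
  apply Set.Finite.subset (t.finite_toSet.image (QuotientGroup.mk : G → G ⧸ H))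
  intro c hc
  obtain ⟨x, hxt, hx⟩ := Set.mem_iUnion₂.1 (ht hc)
  obtain ⟨y, hy, hxy⟩ := hx
  refine ⟨x, hxt, ?_⟩
  have : (QuotientGroup.mk x : G ⧸ H) = QuotientGroup.mk (Quotient.out c) :=
    QuotientGroup.eq.2 (by
      have : x⁻¹ * Quotient.out c = y := by
        rw [← hxy]; simp [smul_eq_mul]
      rw [this]; exact hy)
  rw [this, QuotientGroup.out_eq']

lemma aux_doubleCoset_compact {G : Type*} [Group G] [TopologicalSpace G] [IsTopologicalGroup G]
    (H : Subgroup G) (hH : IsCompact (H : Set G)) (s : G) :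
    IsCompact (doubleCoset H s) := by
  have : doubleCoset H s = (fun q : G × G => q.1 * s * q.2) '' ((H : Set G) ×ˢ (H : Set G)) := by
    ext x
    constructor
    · rintro ⟨h, hh, h', hh', rfl⟩; exact ⟨(h, h'), ⟨hh, hh'⟩, rfl⟩
    · rintro ⟨⟨h, h'⟩, ⟨hh, hh'⟩, rfl⟩; exact ⟨h, hh, h', hh', rfl⟩
  rw [this]
  exact (hH.prod hH).image (by fun_prop)


open Classical in
/-- In the induced-model setting `η = ind_{J¹_P}^{J¹}(η_P)`, with `p : V_η → V_M` the
canonical projection and `ι : V_M → V_η` the inclusion satisfying the key compatibility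
facts, the map `ζ : H_R(G,η) → H_R(G,η_P)`, `ζ(Φ) = μ ∘ Φ` with `μ(f) = p ∘ f ∘ ι`, is an
injective homomorphism of `R`-algebras. -/
theorem statement14 {G R Vη VM : Type*} [Group G] [TopologicalSpace G] [IsTopologicalGroup G]
    [LocallyCompactSpace G] [TotallyDisconnectedSpace G]
    [CommRing R] [AddCommGroup Vη] [Module R Vη] [AddCommGroup VM] [Module R VM]
    (J1 J1P : Subgroup G) (hle : J1P ≤ J1)
    (hJ1open : IsOpen (J1 : Set G)) (hJ1cpt : IsCompact (J1 : Set G))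
    (hJ1Popen : IsOpen (J1P : Set G))
    (η : ↥J1 →* Module.End R Vη) (ηP : ↥J1P →* Module.End R VM)
    (p : Vη →ₗ[R] VM) (ι : VM →ₗ[R] Vη)
    -- `η(j) ∘ ι = ι ∘ η_P(j)` and `p ∘ η(j) = η_P(j) ∘ p` for `j ∈ J¹_P`
    (hcomm₁ : ∀ j : ↥J1P, (η ⟨(j : G), hle j.2⟩) ∘ₗ ι = ι ∘ₗ (ηP j))
    (hcomm₂ : ∀ j : ↥J1P, p ∘ₗ (η ⟨(j : G), hle j.2⟩) = (ηP j) ∘ₗ p)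
    -- `p ∘ η(j) ∘ ι = η_P(j)` if `j ∈ J¹_P` and `0` otherwise
    (hmid : ∀ j : ↥J1, p ∘ₗ (η j) ∘ₗ ι =
      if h : (j : G) ∈ J1P then (ηP ⟨(j : G), h⟩ : Module.End R VM) else 0)
    -- `∑_{j ∈ J¹/J¹_P} η(j) ∘ ι ∘ p ∘ η(j⁻¹) = id`
    (hsum : ∀ φ : Vη, ∑ᶠ c : ↥J1 ⧸ J1P.subgroupOf J1,
      (η (Quotient.out c)) (ι (p ((η (Quotient.out c)⁻¹) φ))) = φ) :
    -- `ζ` maps `H_R(G,η)` into `H_R(G,η_P)`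
    (∀ Φ, IsHeckeFun J1 η Φ → IsHeckeFun J1P ηP (fun g => (p ∘ₗ Φ g) ∘ₗ ι)) ∧
    -- `ζ` is multiplicative
    (∀ Φ₁ Φ₂, IsHeckeFun J1 η Φ₁ → IsHeckeFun J1 η Φ₂ →
      (fun g => (p ∘ₗ heckeConv J1 Φ₁ Φ₂ g) ∘ₗ ι) =
        heckeConv J1P (fun g => (p ∘ₗ Φ₁ g) ∘ₗ ι) (fun g => (p ∘ₗ Φ₂ g) ∘ₗ ι)) ∧
    -- `ζ` is `R`-linear
    (∀ Φ₁ Φ₂ : G → Module.End R Vη,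
      (fun g => (p ∘ₗ (Φ₁ + Φ₂) g) ∘ₗ ι) =
        (fun g => (p ∘ₗ Φ₁ g) ∘ₗ ι) + fun g => (p ∘ₗ Φ₂ g) ∘ₗ ι) ∧
    (∀ (r : R) (Φ : G → Module.End R Vη),
      (fun g => (p ∘ₗ (r • Φ) g) ∘ₗ ι) = r • fun g => (p ∘ₗ Φ g) ∘ₗ ι) ∧
    -- `ζ` is injective
    (∀ Φ₁ Φ₂, IsHeckeFun J1 η Φ₁ → IsHeckeFun J1 η Φ₂ →
      (∀ g : G, (p ∘ₗ Φ₁ g) ∘ₗ ι = (p ∘ₗ Φ₂ g) ∘ₗ ι) → Φ₁ = Φ₂) := by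
  classical
  haveI : CompactSpace ↥J1 := isCompact_iff_compactSpace.mp hJ1cpt
  haveI : Finite (↥J1 ⧸ J1P.subgroupOf J1) :=
    Subgroup.quotient_finite_of_isOpen _ (Subgroup.subgroupOf_isOpen J1 J1P hJ1Popen)
  haveI : Fintype (↥J1 ⧸ J1P.subgroupOf J1) := Fintype.ofFinite _
  -- hsum as a finite sum
  have hsumF : ∀ φ : Vη, ∑ t : ↥J1 ⧸ J1P.subgroupOf J1,
      (η (Quotient.out t)) (ι (p ((η (Quotient.out t)⁻¹) φ))) = φ := by
    intro φ; rw [← finsum_eq_sum_of_fintype]; exact hsum φ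
  -- right and left equivariance
  have hR : ∀ (Φ : G → Module.End R Vη), IsHeckeFun J1 η Φ → ∀ (x : G) (k : ↥J1),
      Φ (x * ↑k) = Φ x * η k := by
    intro Φ hΦ x k
    have := hΦ.1 1 k x
    simpa using this
  have hL : ∀ (Φ : G → Module.End R Vη), IsHeckeFun J1 η Φ → ∀ (x : G) (k : ↥J1),
      Φ (↑k * x) = η k * Φ x := by
    intro Φ hΦ x k
    have := hΦ.1 k 1 x
    simpa using this
  -- coset cover of J1 by J1P-cosets
  have hcover : ∀ x, x ∈ J1 → ∃ t : ↥J1 ⧸ J1P.subgroupOf J1,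
      (↑(Quotient.out t) : G)⁻¹ * x ∈ J1P := by
    intro x hx
    refine ⟨QuotientGroup.mk ⟨x, hx⟩, ?_⟩
    have h1 : (QuotientGroup.mk (Quotient.out (QuotientGroup.mk (⟨x, hx⟩ : ↥J1) :
        ↥J1 ⧸ J1P.subgroupOf J1)) : ↥J1 ⧸ J1P.subgroupOf J1) = QuotientGroup.mk ⟨x, hx⟩ :=
      QuotientGroup.out_eq' _
    have h2 := QuotientGroup.eq.1 h1
    exact h2
  refine ⟨?_, ?_, ?_, ?_, ?_⟩
  · -- ζ maps into H_R(G, ηP)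
    intro Φ hΦ
    constructor
    · intro h h' g
      ext v
      have e1 := LinearMap.congr_fun (hcomm₁ h') v
      have e2 := LinearMap.congr_fun (hcomm₂ h) (Φ g (ι ((ηP h') v)))
      simp only [LinearMap.comp_apply] at e1 e2
      have key : Φ (↑h * g * ↑h') =
          η ⟨(h : G), hle h.2⟩ * Φ g * η ⟨(h' : G), hle h'.2⟩ :=
        hΦ.1 ⟨(h : G), hle h.2⟩ ⟨(h' : G), hle h'.2⟩ g
      simp only [LinearMap.comp_apply, Module.End.mul_apply, key, e1, e2]
    · obtain ⟨S, hS⟩ := hΦ.2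
      set A : Finset G :=
        Finset.univ.image (fun t : ↥J1 ⧸ J1P.subgroupOf J1 => ((Quotient.out t : ↥J1) : G))
        with hA
      refine ⟨(A ×ˢ S ×ˢ A).image (fun q : G × G × G => q.1⁻¹ * q.2.1 * q.2.2), ?_⟩
      intro g hg
      have hΦg : Φ g ≠ 0 := by
        intro h0
        apply hg
        show (p ∘ₗ Φ g) ∘ₗ ι = 0
        rw [h0]
        ext v; simp
      obtain ⟨s, hs, h, hh, h', hh', rfl⟩ := hS g hΦg
      obtain ⟨t1, ht1⟩ := hcover h⁻¹ (J1.inv_mem hh)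
      obtain ⟨t2, ht2⟩ := hcover h' hh'
      set a : G := ((Quotient.out t1 : ↥J1) : G) with ha
      set b : G := ((Quotient.out t2 : ↥J1) : G) with hb
      refine ⟨a⁻¹ * s * b, Finset.mem_image.2 ⟨(a, s, b), ?_, rfl⟩, ?_⟩
      · simp only [Finset.mem_product]
        exact ⟨Finset.mem_image.2 ⟨t1, Finset.mem_univ _, rfl⟩, hs,
          Finset.mem_image.2 ⟨t2, Finset.mem_univ _, rfl⟩⟩
      · refine ⟨h * a, ?_, b⁻¹ * h', ht2, by group⟩
        have := J1P.inv_mem ht1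
        simpa using this
  · -- multiplicativity
    intro Φ₁ Φ₂ hΦ₁ hΦ₂
    funext g
    show (p ∘ₗ heckeConv J1 Φ₁ Φ₂ g) ∘ₗ ι =
      heckeConv J1P (fun g => (p ∘ₗ Φ₁ g) ∘ₗ ι) (fun g => (p ∘ₗ Φ₂ g) ∘ₗ ι) g
    obtain ⟨S₁, hS₁⟩ := hΦ₁.2
    set K₁ : Set G := ⋃ s ∈ (S₁ : Set G), doubleCoset J1 s with hK₁def
    have hK₁cpt : IsCompact K₁ :=
      S₁.finite_toSet.isCompact_biUnion (fun s _ => aux_doubleCoset_compact J1 hJ1cpt s)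
    have hsupp₁ : ∀ x, Φ₁ x ≠ 0 → x ∈ K₁ := by
      intro x hx
      obtain ⟨s, hs, hmem⟩ := hS₁ x hx
      exact Set.mem_biUnion hs hmem
    have hK₁mul : ∀ x ∈ K₁, ∀ k ∈ J1, x * k ∈ K₁ := by
      intro x hx k hk
      obtain ⟨s, hs, h, hh, h', hh', rfl⟩ := Set.mem_iUnion₂.1 hx
      exact Set.mem_biUnion hs ⟨h, hh, h' * k, J1.mul_mem hh' hk, by group⟩
    set F : G → Module.End R VM :=
      fun x => ((p ∘ₗ Φ₁ x) ∘ₗ ι) * ((p ∘ₗ Φ₂ (x⁻¹ * g)) ∘ₗ ι) with hF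
    -- right J1P-invariance of F
    have hFinv : ∀ (x : G) (k : ↥J1), (k : G) ∈ J1P → F (x * ↑k) = F x := by
      intro x k hk
      have ekey1 : ∀ v, (η k) (ι v) = ι ((ηP ⟨(k : G), hk⟩) v) := by
        intro v
        have e := LinearMap.congr_fun (hcomm₁ ⟨(k : G), hk⟩) v
        simp only [LinearMap.comp_apply] at e
        exact e
      have ekey2 : ∀ w, p ((η k⁻¹) w) = (ηP (⟨(k : G), hk⟩ : ↥J1P)⁻¹) (p w) := by
        intro w
        have e := LinearMap.congr_fun (hcomm₂ (⟨(k : G), hk⟩ : ↥J1P)⁻¹) w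
        simp only [LinearMap.comp_apply] at e
        exact e
      have h1 : (p ∘ₗ Φ₁ (x * ↑k)) ∘ₗ ι =
          ((p ∘ₗ Φ₁ x) ∘ₗ ι) * ηP ⟨(k : G), hk⟩ := by
        ext v
        simp only [LinearMap.comp_apply, Module.End.mul_apply]
        rw [hR Φ₁ hΦ₁ x k]
        simp only [Module.End.mul_apply]
        rw [ekey1]
      have harg : (x * (k : G))⁻¹ * g = (↑(k⁻¹) : G) * (x⁻¹ * g) := by
        simp only [InvMemClass.coe_inv]; group
      have h2 : (p ∘ₗ Φ₂ ((x * ↑k)⁻¹ * g)) ∘ₗ ι =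
          (ηP (⟨(k : G), hk⟩ : ↥J1P)⁻¹ : Module.End R VM) * ((p ∘ₗ Φ₂ (x⁻¹ * g)) ∘ₗ ι) := by
        ext v
        simp only [LinearMap.comp_apply, Module.End.mul_apply]
        rw [harg, hL Φ₂ hΦ₂ (x⁻¹ * g) k⁻¹]
        simp only [Module.End.mul_apply]
        rw [ekey2]
      simp only [hF]
      rw [h1, h2, mul_assoc, ← mul_assoc (ηP ⟨(k : G), hk⟩), ← map_mul, mul_inv_cancel,
        map_one, one_mul]
    have hFout : ∀ x : G, F (Quotient.out (QuotientGroup.mk x : G ⧸ J1P)) = F x := by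
      intro x
      obtain ⟨u, hu⟩ := QuotientGroup.mk_out_eq_mul (s := J1P) x
      rw [hu]
      exact hFinv x ⟨(u : G), hle u.2⟩ u.2
    -- middle insertion
    have hmidins : ∀ y : G, (p ∘ₗ (Φ₁ y * Φ₂ (y⁻¹ * g))) ∘ₗ ι =
        ∑ t : ↥J1 ⧸ J1P.subgroupOf J1, F (y * ↑(Quotient.out t)) := by
      intro y
      ext v
      simp only [LinearMap.comp_apply, Module.End.mul_apply, LinearMap.coe_sum,
        Finset.sum_apply, hF]
      conv_lhs => rw [← hsumF (Φ₂ (y⁻¹ * g) (ι v))]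
      simp only [map_sum]
      refine Finset.sum_congr rfl fun t _ => ?_
      have e1 : (y * (↑(Quotient.out t) : G))⁻¹ * g =
          (↑((Quotient.out t)⁻¹) : G) * (y⁻¹ * g) := by
        simp only [InvMemClass.coe_inv]; group
      rw [e1, hL Φ₂ hΦ₂ (y⁻¹ * g) (Quotient.out t)⁻¹, hR Φ₁ hΦ₁ y (Quotient.out t)]
      simp only [Module.End.mul_apply, LinearMap.comp_apply]
    -- finiteness
    have hDfin : {d : G ⧸ J1 | Quotient.out d ∈ K₁}.Finite :=
      aux_coset_finite J1 hJ1open hK₁cpt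
    set D : Finset (G ⧸ J1) := hDfin.toFinset with hD
    set β : (G ⧸ J1) × (↥J1 ⧸ J1P.subgroupOf J1) → G ⧸ J1P :=
      fun q => QuotientGroup.mk (Quotient.out q.1 * ↑(Quotient.out q.2)) with hβ
    have hβinj : Function.Injective β := by
      rintro ⟨d₁, t₁⟩ ⟨d₂, t₂⟩ hq
      simp only [hβ] at hq
      have hm := QuotientGroup.eq.1 hq
      have hd : d₁ = d₂ := by
        have hJ : (Quotient.out d₁)⁻¹ * Quotient.out d₂ ∈ J1 := by
          have h1 := hle hm
          have h2 : (Quotient.out d₁)⁻¹ * Quotient.out d₂ =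
              ↑(Quotient.out t₁) * ((Quotient.out d₁ * ↑(Quotient.out t₁))⁻¹ *
                (Quotient.out d₂ * ↑(Quotient.out t₂))) * (↑(Quotient.out t₂))⁻¹ := by
            group
          rw [h2]
          exact J1.mul_mem (J1.mul_mem (Quotient.out t₁).2 h1)
            (J1.inv_mem (Quotient.out t₂).2)
        have h3 := QuotientGroup.eq.2 hJ
        rwa [QuotientGroup.out_eq', QuotientGroup.out_eq'] at h3
      subst hd
      have ht : t₁ = t₂ := by
        have hmm : (↑(Quotient.out t₁) : G)⁻¹ * ↑(Quotient.out t₂) ∈ J1P := by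
          have h2 : (↑(Quotient.out t₁) : G)⁻¹ * ↑(Quotient.out t₂) =
              (Quotient.out d₁ * ↑(Quotient.out t₁))⁻¹ *
                (Quotient.out d₁ * ↑(Quotient.out t₂)) := by group
          rw [h2]; exact hm
        have hsub : (Quotient.out t₁)⁻¹ * Quotient.out t₂ ∈ J1P.subgroupOf J1 := by
          rw [Subgroup.mem_subgroupOf]
          simpa using hmm
        have h3 := QuotientGroup.eq.2 hsub
        rwa [QuotientGroup.out_eq', QuotientGroup.out_eq'] at h3
      rw [ht]
    have hβsurj : Function.Surjective β := by
      intro c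
      obtain ⟨u, hu⟩ := QuotientGroup.mk_out_eq_mul (s := J1) (Quotient.out c)
      set t : ↥J1 ⧸ J1P.subgroupOf J1 := QuotientGroup.mk u⁻¹ with htdef
      have h1 : (u : G) * ↑(Quotient.out t) ∈ J1P := by
        have h0 : (QuotientGroup.mk (u⁻¹ : ↥J1) : ↥J1 ⧸ J1P.subgroupOf J1) =
            QuotientGroup.mk (Quotient.out t) := by
          rw [← htdef, QuotientGroup.out_eq']
        have h2 := QuotientGroup.eq.1 h0
        rw [Subgroup.mem_subgroupOf] at h2
        simpa using h2
      refine ⟨(QuotientGroup.mk (Quotient.out c), t), ?_⟩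
      simp only [hβ]
      rw [hu]
      have h3 : (QuotientGroup.mk (Quotient.out c * ↑u * ↑(Quotient.out t)) : G ⧸ J1P) =
          QuotientGroup.mk (Quotient.out c) := by
        apply QuotientGroup.eq.2
        have h4 : (Quotient.out c * ↑u * ↑(Quotient.out t))⁻¹ * Quotient.out c =
            ((u : G) * ↑(Quotient.out t))⁻¹ := by group
        rw [h4]
        exact J1P.inv_mem h1
      rw [h3, QuotientGroup.out_eq']
    -- support bounds
    have hsubΦ : Function.support
        (fun d : G ⧸ J1 => Φ₁ (Quotient.out d) * Φ₂ ((Quotient.out d)⁻¹ * g)) ⊆ ↑D := by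
      intro d hd
      have hne : Φ₁ (Quotient.out d) ≠ 0 := by
        intro h0
        apply hd
        show Φ₁ (Quotient.out d) * Φ₂ ((Quotient.out d)⁻¹ * g) = 0
        rw [h0, zero_mul]
      exact Finset.mem_coe.2 (hDfin.mem_toFinset.2 (hsupp₁ _ hne))
    set C : Finset (G ⧸ J1P) :=
      (D ×ˢ (Finset.univ : Finset (↥J1 ⧸ J1P.subgroupOf J1))).image β with hC
    have hsubF : Function.support (fun c : G ⧸ J1P => F (Quotient.out c)) ⊆ ↑C := by
      intro c hc
      obtain ⟨q, rfl⟩ := hβsurj c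
      have hne : F (Quotient.out (β q)) ≠ 0 := hc
      rw [hβ] at hne
      rw [hFout] at hne
      have hA : (p ∘ₗ Φ₁ (Quotient.out q.1 * ↑(Quotient.out q.2))) ∘ₗ ι ≠ 0 := by
        intro h0
        apply hne
        simp only [hF]
        rw [h0, zero_mul]
      have hΦ1ne : Φ₁ (Quotient.out q.1 * ↑(Quotient.out q.2)) ≠ 0 := by
        intro h0
        apply hA
        rw [h0]
        ext v; simp
      have houtK : Quotient.out q.1 ∈ K₁ := by
        have h5 := hK₁mul _ (hsupp₁ _ hΦ1ne) ((↑(Quotient.out q.2) : G))⁻¹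
          (J1.inv_mem (Quotient.out q.2).2)
        simpa using h5
      exact Finset.mem_coe.2 (Finset.mem_image.2 ⟨q,
        Finset.mem_product.2 ⟨hDfin.mem_toFinset.2 houtK, Finset.mem_univ _⟩, rfl⟩)
    -- assemble
    have hLHS : (p ∘ₗ heckeConv J1 Φ₁ Φ₂ g) ∘ₗ ι =
        ∑ d ∈ D, (p ∘ₗ (Φ₁ (Quotient.out d) * Φ₂ ((Quotient.out d)⁻¹ * g))) ∘ₗ ι := by
      have h0 : heckeConv J1 Φ₁ Φ₂ g =
          ∑ d ∈ D, Φ₁ (Quotient.out d) * Φ₂ ((Quotient.out d)⁻¹ * g) :=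
        finsum_eq_sum_of_support_subset _ hsubΦ
      rw [h0]
      ext v
      simp [LinearMap.sum_apply, map_sum]
    have hRHS : (∑ᶠ c : G ⧸ J1P, F (Quotient.out c)) =
        ∑ d ∈ D, ∑ t : ↥J1 ⧸ J1P.subgroupOf J1, F (Quotient.out d * ↑(Quotient.out t)) := by
      rw [finsum_eq_sum_of_support_subset _ hsubF, hC,
        Finset.sum_image (fun q _ q' _ h => hβinj h), Finset.sum_product]
      refine Finset.sum_congr rfl fun d _ => Finset.sum_congr rfl fun t _ => ?_
      rw [hβ]
      exact hFout _
    calc (p ∘ₗ heckeConv J1 Φ₁ Φ₂ g) ∘ₗ ι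
        = ∑ d ∈ D, (p ∘ₗ (Φ₁ (Quotient.out d) * Φ₂ ((Quotient.out d)⁻¹ * g))) ∘ₗ ι := hLHS
      _ = ∑ d ∈ D, ∑ t : ↥J1 ⧸ J1P.subgroupOf J1,
            F (Quotient.out d * ↑(Quotient.out t)) :=
          Finset.sum_congr rfl fun d _ => hmidins _
      _ = ∑ᶠ c : G ⧸ J1P, F (Quotient.out c) := hRHS.symm
      _ = heckeConv J1P (fun g => (p ∘ₗ Φ₁ g) ∘ₗ ι) (fun g => (p ∘ₗ Φ₂ g) ∘ₗ ι) g := by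
          simp only [heckeConv, hF]
  · intro Φ₁ Φ₂; funext g
    simp [LinearMap.add_comp, LinearMap.comp_add]
  · intro r Φ; funext g
    ext v
    simp
  · -- injectivity
    intro Φ₁ Φ₂ hΦ₁ hΦ₂ hZ
    have claim : ∀ (x : G) (v : VM), Φ₁ x (ι v) = Φ₂ x (ι v) := by
      intro x v
      rw [← hsumF (Φ₁ x (ι v)), ← hsumF (Φ₂ x (ι v))]
      refine Finset.sum_congr rfl fun t _ => ?_
      have a1 : (η (Quotient.out t)⁻¹) (Φ₁ x (ι v)) =
          Φ₁ ((↑((Quotient.out t)⁻¹) : G) * x) (ι v) := by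
        rw [hL Φ₁ hΦ₁ x (Quotient.out t)⁻¹]; rfl
      have a2 : (η (Quotient.out t)⁻¹) (Φ₂ x (ι v)) =
          Φ₂ ((↑((Quotient.out t)⁻¹) : G) * x) (ι v) := by
        rw [hL Φ₂ hΦ₂ x (Quotient.out t)⁻¹]; rfl
      rw [a1, a2]
      have := LinearMap.congr_fun (hZ ((↑((Quotient.out t)⁻¹) : G) * x)) v
      simp only [LinearMap.comp_apply] at this
      rw [this]
    funext x
    ext φ
    calc Φ₁ x φ = Φ₁ x (∑ t : ↥J1 ⧸ J1P.subgroupOf J1,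
          (η (Quotient.out t)) (ι (p ((η (Quotient.out t)⁻¹) φ)))) := by rw [hsumF φ]
      _ = ∑ t : ↥J1 ⧸ J1P.subgroupOf J1,
          Φ₁ (x * ↑(Quotient.out t)) (ι (p ((η (Quotient.out t)⁻¹) φ))) := by
          rw [map_sum]
          refine Finset.sum_congr rfl fun t _ => ?_
          rw [hR Φ₁ hΦ₁ x (Quotient.out t)]; rfl
      _ = ∑ t : ↥J1 ⧸ J1P.subgroupOf J1,
          Φ₂ (x * ↑(Quotient.out t)) (ι (p ((η (Quotient.out t)⁻¹) φ))) :=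
          Finset.sum_congr rfl fun t _ => claim _ _
      _ = Φ₂ x (∑ t : ↥J1 ⧸ J1P.subgroupOf J1,
          (η (Quotient.out t)) (ι (p ((η (Quotient.out t)⁻¹) φ)))) := by
          rw [map_sum]
          refine Finset.sum_congr rfl fun t _ => ?_
          rw [hR Φ₂ hΦ₂ x (Quotient.out t)]; rfl
      _ = Φ₂ x φ := by rw [hsumF φ]
end

section
/- Let λ = κ ⊗ id: for each j ∈ J write an element f̃ of H_R(J,η) as f̃(j) = Φ(j)κ(j). The map Θ': H_R(K_B,K¹_B) → H_R(J,η), Φ ↦ Φ⊗κ (i.e. (Φ⊗κ)(j) = Φ(j)κ(j)), is an isomorphism of R-algebras, where H_R(K_B,K¹_B) is identified with the group algebra R[J/J¹] ≅ R[K_B/K¹_B]. -/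
open scoped BigOperators

/-- Elements of the scalar Hecke algebra `H_R(K_B, K¹_B) ≅ R[J/J¹]`: `J¹`-bi-invariant
`R`-valued functions on `J` supported on finitely many double cosets. -/
def IsScalarHeckeFun {G R : Type*} [Group G] [CommRing R]
    (H : Subgroup G) (Φ : G → R) : Prop :=
  (∀ (h h' : ↥H) (g : G), Φ (↑h * g * ↑h') = Φ g) ∧
  ∃ S : Finset G, ∀ g : G, Φ g ≠ 0 → ∃ s ∈ S, g ∈ doubleCoset H s

/-- Convolution of scalar Hecke functions. -/
noncomputable def scalarConv {G R : Type*} [Group G] [CommRing R]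
    (H : Subgroup G) (Φ₁ Φ₂ : G → R) : G → R :=
  fun g => ∑ᶠ c : G ⧸ H, Φ₁ (Quotient.out c) * Φ₂ ((Quotient.out c)⁻¹ * g)

private lemma kappa_ne_zero' {J R Vη : Type*} [Group J] [Field R]
    [AddCommGroup Vη] [Module R Vη] [Nontrivial Vη]
    (κ : J →* Module.End R Vη) (j : J) : κ j ≠ 0 := by
  intro h
  obtain ⟨v, hv⟩ := exists_ne (0 : Vη)
  apply hv
  have h1 : κ j⁻¹ * κ j = 1 := by rw [← κ.map_mul, inv_mul_cancel, κ.map_one]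
  calc v = (κ j⁻¹ * κ j) v := by rw [h1]; rfl
    _ = κ j⁻¹ (κ j v) := rfl
    _ = κ j⁻¹ ((0 : Module.End R Vη) v) := by rw [h]
    _ = 0 := by rw [LinearMap.zero_apply, map_zero]

private lemma smul_kappa_inj' {J R Vη : Type*} [Group J] [Field R]
    [AddCommGroup Vη] [Module R Vη] [Nontrivial Vη]
    (κ : J →* Module.End R Vη) (j : J) {c d : R}
    (h : c • κ j = d • κ j) : c = d := by
  by_contra hcd
  have h0 : (c - d) • κ j = 0 := by rw [sub_smul, h, sub_self]
  have hc : (c - d) ≠ 0 := sub_ne_zero.mpr hcd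
  have : κ j = 0 := by
    calc κ j = (c - d)⁻¹ • ((c - d) • κ j) := by
          rw [smul_smul, inv_mul_cancel₀ hc, one_smul]
      _ = 0 := by rw [h0, smul_zero]
  exact kappa_ne_zero' κ j this

/-- Let `J` be a group with normal subgroup `J¹` of finite index, `η` an irreducible
representation of `J¹` over an algebraically closed field `R` extending to a
representation `κ` of `J` such that each intertwining space `I_j(η)` is spanned by
`κ(j)`.  Then `Θ' : H_R(K_B, K¹_B) ≅ R[J/J¹] → H_R(J, η)`, `Φ ↦ Φ ⊗ κ` (i.e.
`(Φ ⊗ κ)(j) = Φ(j) κ(j)`), is an isomorphism of `R`-algebras. -/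
theorem statement15 {J R Vη : Type*} [Group J] [Field R] [IsAlgClosed R]
    [AddCommGroup Vη] [Module R Vη] [Nontrivial Vη]
    (J1 : Subgroup J) [J1.Normal] [Finite (J ⧸ J1)]
    (κ : J →* Module.End R Vη) (η : ↥J1 →* Module.End R Vη)
    (hres : ∀ x : ↥J1, κ (x : J) = η x)
    (hirr : ∀ U : Submodule R Vη, (∀ (x : ↥J1), ∀ v ∈ U, η x v ∈ U) → U = ⊥ ∨ U = ⊤)
    (hdim1 : ∀ (j : J) (f : Module.End R Vη),
      (∀ (x : J) (hx : x ∈ J1) (hx' : j * x * j⁻¹ ∈ J1),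
        η ⟨j * x * j⁻¹, hx'⟩ * f = f * η ⟨x, hx⟩) →
      ∃ c : R, f = c • κ j) :
    -- `Θ'` maps into `H_R(J, η)`
    (∀ Φ : J → R, IsScalarHeckeFun J1 Φ → IsHeckeFun J1 η (fun j => Φ j • κ j)) ∧
    -- `Θ'` is multiplicative
    (∀ Φ₁ Φ₂ : J → R, IsScalarHeckeFun J1 Φ₁ → IsScalarHeckeFun J1 Φ₂ →
      (fun j => scalarConv J1 Φ₁ Φ₂ j • κ j) =
        heckeConv J1 (fun j => Φ₁ j • κ j) (fun j => Φ₂ j • κ j)) ∧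
    -- `Θ'` is `R`-linear
    (∀ Φ₁ Φ₂ : J → R,
      (fun j => (Φ₁ j + Φ₂ j) • κ j) = (fun j => Φ₁ j • κ j) + fun j => Φ₂ j • κ j) ∧
    (∀ (r : R) (Φ : J → R),
      (fun j => (r * Φ j) • κ j) = r • fun j => Φ j • κ j) ∧
    -- `Θ'` is injective
    (∀ Φ₁ Φ₂ : J → R, IsScalarHeckeFun J1 Φ₁ → IsScalarHeckeFun J1 Φ₂ →
      (fun j => Φ₁ j • κ j) = (fun j => Φ₂ j • κ j) → Φ₁ = Φ₂) ∧
    -- `Θ'` is surjective onto `H_R(J, η)`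
    (∀ f : J → Module.End R Vη, IsHeckeFun J1 η f →
      ∃ Φ : J → R, IsScalarHeckeFun J1 Φ ∧ f = fun j => Φ j • κ j) := by
  constructor
  · -- maps into H_R(J, η)
    rintro Φ ⟨hbi, S, hS⟩
    constructor
    · intro h h' g
      have hκ : κ (↑h * g * ↑h') = η h * κ g * η h' := by
        rw [κ.map_mul, κ.map_mul, hres, hres]
      show Φ (↑h * g * ↑h') • κ (↑h * g * ↑h') = η h * (Φ g • κ g) * η h'
      rw [hbi, hκ, mul_smul_comm, smul_mul_assoc]
    · refine ⟨S, fun g hg => hS g ?_⟩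
      intro h0
      exact hg (show Φ g • κ g = 0 by rw [h0, zero_smul])
  refine ⟨?_, ?_, ?_, ?_, ?_⟩
  · -- multiplicative
    intro Φ₁ Φ₂ _ _
    funext g
    have : Fintype (J ⧸ J1) := Fintype.ofFinite _
    simp only [scalarConv, heckeConv, finsum_eq_sum_of_fintype, Finset.sum_smul]
    refine Finset.sum_congr rfl fun c _ => ?_
    rw [smul_mul_assoc, mul_smul_comm, smul_smul, ← κ.map_mul, mul_inv_cancel_left]
  · intro Φ₁ Φ₂
    funext j
    simp [add_smul]
  · intro r Φ
    funext j
    simp [mul_smul]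
  · -- injective
    intro Φ₁ Φ₂ _ _ h
    funext j
    exact smul_kappa_inj' κ j (congrFun h j)
  · -- surjective
    rintro f ⟨hbi, S, hS⟩
    have key : ∀ j : J, ∃ c : R, f j = c • κ j := by
      intro j
      apply hdim1 j
      intro x hx hx'
      have e1 := hbi ⟨j * x * j⁻¹, hx'⟩ 1 j
      have e2 := hbi 1 ⟨x, hx⟩ j
      simp only [OneMemClass.coe_one, map_one, mul_one, one_mul] at e1 e2
      rw [← e1, ← e2]
      congr 1
      group
    choose Φ hΦ using key
    refine ⟨Φ, ⟨⟨?_, ?_⟩, funext hΦ⟩⟩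
    · intro h h' g
      apply smul_kappa_inj' κ (↑h * g * ↑h')
      have hκ : κ (↑h * g * ↑h') = η h * κ g * η h' := by
        rw [κ.map_mul, κ.map_mul, hres, hres]
      calc Φ (↑h * g * ↑h') • κ (↑h * g * ↑h') = f (↑h * g * ↑h') := (hΦ _).symm
        _ = η h * f g * η h' := hbi h h' g
        _ = η h * (Φ g • κ g) * η h' := by rw [hΦ]
        _ = Φ g • κ (↑h * g * ↑h') := by
            rw [hκ, mul_smul_comm, smul_mul_assoc]
    · refine ⟨S, fun g hg => hS g ?_⟩
      rw [hΦ g]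
      intro h0
      exact kappa_ne_zero' κ g (by
        have := congrArg (fun A => (Φ g)⁻¹ • A) h0
        simpa [smul_smul, inv_mul_cancel₀ hg] using this)
end

section
/- In GL_{m'}(A(E)), let Δ be the monoid of diagonal matrices diag(ϖ^{a₁},…,ϖ^{a_{m'}}) with 0 ≤ a₁ ≤ … ≤ a_{m'}, Z the group of upper unitriangular matrices with strictly-upper entries in ϖ⁻¹P(E), Ĩ¹ the group of matrices with diagonal entries in 1+P(E), above-diagonal entries in A(E)'s order 𝔄(E) and below-diagonal entries in P(E), and 𝐖 = W ⋉ Δ̂ the group of monomial matrices with entries in ϖ^ℤ times units. If τ ∈ Δ and z ∈ Z satisfy Ĩ¹ τ z Ĩ¹ ∩ 𝐖 ≠ ∅, then Ĩ¹ τ z Ĩ¹ ∩ 𝐖 = {τ}. -/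
/-- The monoid `Δ` of diagonal matrices `diag(ϖ^{a₁},…,ϖ^{a_{m'}})` with
`0 ≤ a₁ ≤ ⋯ ≤ a_{m'}`. -/
def deltaSet {A : Type*} [Ring A] (m' : ℕ) (ϖ : Aˣ) :
    Set (Matrix (Fin m') (Fin m') A) :=
  {T | ∃ a : Fin m' → ℤ, Monotone a ∧ (∀ i, 0 ≤ a i) ∧
    T = Matrix.diagonal fun i => ((ϖ ^ (a i) : Aˣ) : A)}

/-- The set `𝒵` of upper unitriangular matrices with strictly-upper entries in
`ϖ⁻¹ P(E)`, where `P(E) = {x | 1 ≤ v x}`. -/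
def zSet {A : Type*} [Ring A] (m' : ℕ) (v : A → WithTop ℤ) (ϖ : Aˣ) :
    Set (Matrix (Fin m') (Fin m') A) :=
  {z | (∀ i, z i i = 1) ∧ (∀ i j : Fin m', i < j → (1 : WithTop ℤ) ≤ v ((ϖ : A) * z i j)) ∧
    ∀ i j : Fin m', j < i → z i j = 0}

/-- The group `Ĩ¹`: diagonal entries in `1 + P(E)`, above-diagonal entries in `𝔄(E)`,
below-diagonal entries in `P(E)`, where `𝔄(E) = {x | 0 ≤ v x}` and
`P(E) = {x | 1 ≤ v x}`. -/
def iOneSet {A : Type*} [Ring A] (m' : ℕ) (v : A → WithTop ℤ) :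
    Set (Matrix (Fin m') (Fin m') A) :=
  {x | (∀ i, (1 : WithTop ℤ) ≤ v (x i i - 1)) ∧
    (∀ i j : Fin m', i < j → (0 : WithTop ℤ) ≤ v (x i j)) ∧
    ∀ i j : Fin m', j < i → (1 : WithTop ℤ) ≤ v (x i j)}

/-- The group `𝐖 = W ⋉ Δ̂` of monomial matrices with entries powers of `ϖ`. -/
def wSet {A : Type*} [Ring A] (m' : ℕ) (ϖ : Aˣ) :
    Set (Matrix (Fin m') (Fin m') A) :=
  {M | ∃ (w : Equiv.Perm (Fin m')) (b : Fin m' → ℤ),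
    ∀ i j : Fin m', M i j = if i = w j then ((ϖ ^ (b j) : Aˣ) : A) else 0}

section Helpers
variable {A : Type*} [Ring A] (v : A → WithTop ℤ) (ϖ : Aˣ)
variable (hv0 : ∀ x : A, v x = ⊤ ↔ x = 0)
    (hv1 : v 1 = 0)
    (hadd : ∀ x y : A, min (v x) (v y) ≤ v (x + y))
    (hneg : ∀ x : A, v (-x) = v x)
    (hmul : ∀ x y : A, v x + v y ≤ v (x * y))
    (hϖpos : (0 : WithTop ℤ) < v (ϖ : A))
    (hϖl : ∀ x : A, v ((ϖ : A) * x) = v (ϖ : A) + v x)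
    (hunit : ∀ x : A, (1 : WithTop ℤ) ≤ v (x - 1) → IsUnit x)
    (hvinv : ∀ u : Aˣ, v (u : A) = 0 → v ((u⁻¹ : Aˣ) : A) = 0)

include hv0 in
lemma st16vzero : v 0 = ⊤ := (hv0 0).2 rfl

include hadd hneg in
lemma st16vsub (s t : A) : min (v s) (v t) ≤ v (s - t) := by
  have := hadd s (-t); rw [hneg t] at this; simpa [sub_eq_add_neg] using this

include hv0 hadd in
lemma st16vsum {ι : Type*} (s : Finset ι) (f : ι → A) (c : WithTop ℤ)
    (h : ∀ k ∈ s, c ≤ v (f k)) : c ≤ v (∑ k ∈ s, f k) := by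
  classical
  induction s using Finset.induction_on with
  | empty => simp [st16vzero v hv0]
  | @insert x0 s0 hnot ih =>
    rw [Finset.sum_insert hnot]
    refine le_trans ?_ (hadd _ _)
    exact le_min (h x0 (Finset.mem_insert_self x0 s0))
      (ih fun k hk => h k (Finset.mem_insert_of_mem hk))

include hv1 hadd hneg in
lemma st16vone (t : A) (h : (1 : WithTop ℤ) ≤ v (t - 1)) : v t = 0 := by
  have h1 : (0 : WithTop ℤ) ≤ v t := by
    have := hadd (t - 1) 1
    simp only [sub_add_cancel] at this
    refine le_trans ?_ this
    simp only [le_min_iff, hv1]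
    exact ⟨le_trans (by norm_num) h, le_refl _⟩
  by_contra hne
  have h2 : (1 : WithTop ℤ) ≤ v t := by
    rcases lt_or_ge (v t) 1 with hlt | hle
    · exfalso
      -- v t ≥ 0, v t < 1, v t ≠ 0 impossible for WithTop ℤ
      rcases eq_or_ne (v t) ⊤ with ht | ht
      · rw [ht] at hlt; exact absurd hlt (by simp)
      · lift v t to ℤ using ht with c
        apply hne
        have : (0:ℤ) ≤ c := by exact_mod_cast h1
        have : c < 1 := by exact_mod_cast hlt
        norm_cast; omega
    · exact hle
  have : (1 : WithTop ℤ) ≤ v 1 := by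
    have := st16vsub v hadd hneg t (t-1)
    simp only [sub_sub_cancel] at this
    exact le_trans (le_min h2 h) this
  rw [hv1] at this; exact absurd this (by norm_num)

include hv0 hv1 hϖpos in
lemma st16e : ∃ e : ℤ, v (ϖ : A) = (e : WithTop ℤ) ∧ 1 ≤ e := by
  rcases eq_or_ne (v (ϖ : A)) ⊤ with ht | ht
  · exfalso
    have h0 : (ϖ : A) = 0 := (hv0 _).1 ht
    have h1 : (1 : A) = 0 := by
      have := ϖ.inv_mul
      rw [h0] at this
      simpa using this.symm
    have h2 : v (1 : A) = ⊤ := by rw [h1]; exact (hv0 0).2 rfl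
    rw [hv1] at h2
    exact absurd h2 (by simp)
  · lift v (ϖ : A) to ℤ using ht with e he
    exact ⟨e, rfl, by exact_mod_cast hϖpos⟩

variable (e : ℤ) (he : v (ϖ : A) = (e : WithTop ℤ))

include hϖl he in
lemma st16vPnat : ∀ (n : ℕ) (t : A), v (((ϖ^(n:ℤ) : Aˣ) : A) * t) = (((n:ℤ) * e : ℤ) : WithTop ℤ) + v t := by
  intro n
  induction n with
  | zero => intro t; simp
  | succ n ih =>
    intro t
    have hco : ((ϖ^((n:ℤ)+1) : Aˣ) : A) = (ϖ:A) * ((ϖ^(n:ℤ) :Aˣ):A) := by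
      rw [add_comm, zpow_one_add]; rfl
    push_cast
    rw [hco, mul_assoc, hϖl, ih, he, ← add_assoc]
    congr 1
    rw [← WithTop.coe_add]
    congr 1
    push_cast
    ring

include hϖl he in
lemma st16vP : ∀ (b : ℤ) (t : A), v (((ϖ^b : Aˣ) : A) * t) = ((b * e : ℤ) : WithTop ℤ) + v t := by
  intro b t
  rcases le_or_gt 0 b with hb | hb
  · obtain ⟨n, rfl⟩ := Int.eq_ofNat_of_zero_le hb
    exact st16vPnat v ϖ hϖl e he n t
  · obtain ⟨n, hn⟩ : ∃ n : ℕ, b = -(n:ℤ) := ⟨b.natAbs, by omega⟩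
    subst hn
    have key := st16vPnat v ϖ hϖl e he n (((ϖ^(-(n:ℤ)) : Aˣ) : A) * t)
    have hco : ((ϖ^((n:ℤ)) : Aˣ) : A) * (((ϖ^(-(n:ℤ)) : Aˣ) : A) * t) = t := by
      rw [← mul_assoc, ← Units.val_mul, ← zpow_add]
      simp
    rw [hco] at key
    refine WithTop.add_left_cancel (WithTop.coe_ne_top (a := ((n:ℤ)*e))) ?_
    rw [← key, ← add_assoc, ← WithTop.coe_add]
    norm_num

include hv1 hϖl he in
lemma st16vPone (b : ℤ) : v ((ϖ^b : Aˣ) : A) = ((b * e : ℤ) : WithTop ℤ) := by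
  have := st16vP v ϖ hϖl e he b 1
  rw [mul_one, hv1] at this
  · rw [this, add_zero]

include hv1 hadd hneg hmul hunit hvinv in
lemma st16unit (t : A) (ht : (1 : WithTop ℤ) ≤ v (t - 1)) :
    ∃ u : Aˣ, (u : A) = t ∧ v ((u:A)) = 0 ∧ v ((u⁻¹ : Aˣ) : A) = 0 ∧
      (1 : WithTop ℤ) ≤ v (((u⁻¹ : Aˣ) : A) - 1) := by
  obtain ⟨u, hu⟩ := hunit t ht
  have h0 : v ((u : A)) = 0 := by rw [hu]; exact st16vone v hv1 hadd hneg t ht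
  have hinv : v ((u⁻¹ : Aˣ) : A) = 0 := hvinv u h0
  refine ⟨u, hu, h0, hinv, ?_⟩
  have he : ((u⁻¹ : Aˣ) : A) - 1 = ((u⁻¹ : Aˣ) : A) * (1 - (u : A)) := by
    rw [mul_sub, mul_one, Units.inv_mul]
  rw [he]
  refine le_trans ?_ (hmul _ _)
  rw [hinv, zero_add]
  rw [show (1 : A) - (u:A) = -((u:A) - 1) from (neg_sub _ _).symm, hneg, hu]
  exact ht

end Helpers

section Inv
variable {A : Type*} [Ring A] (v : A → WithTop ℤ)
variable (hv0 : ∀ x : A, v x = ⊤ ↔ x = 0)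
    (hv1 : v 1 = 0)
    (hadd : ∀ x y : A, min (v x) (v y) ≤ v (x + y))
    (hneg : ∀ x : A, v (-x) = v x)
    (hmul : ∀ x y : A, v x + v y ≤ v (x * y))
    (hunit : ∀ x : A, (1 : WithTop ℤ) ≤ v (x - 1) → IsUnit x)
    (hvinv : ∀ u : Aˣ, v (u : A) = 0 → v ((u⁻¹ : Aˣ) : A) = 0)


include hmul in
lemma st16vmul3 (a b c : A) : v a + v b + v c ≤ v (a * b * c) :=
  le_trans (add_le_add_left (hmul a b) (v c)) (hmul (a*b) c)

include hv1 hadd hneg in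
lemma st16diag0 (n : ℕ) (x : Matrix (Fin n) (Fin n) A) (hx : x ∈ iOneSet n v)
    (i : Fin n) : v (x i i) = 0 := st16vone v hv1 hadd hneg _ (hx.1 i)

include hv1 hadd hneg in
lemma st16nonneg (n : ℕ) (x : Matrix (Fin n) (Fin n) A) (hx : x ∈ iOneSet n v)
    (i j : Fin n) : (0 : WithTop ℤ) ≤ v (x i j) := by
  obtain ⟨h1, h2, h3⟩ := hx
  rcases lt_trichotomy i j with h | h | h
  · exact h2 i j h
  · subst h
    rw [st16vone v hv1 hadd hneg _ (h1 i)]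
  · exact le_trans (by norm_num) (h3 i j h)

include hv0 hv1 hadd hneg hmul hunit hvinv in
theorem st16inv : ∀ (n : ℕ) (y : Matrix (Fin n) (Fin n) A), y ∈ iOneSet n v →
    ∃ y', y * y' = 1 ∧ y' * y = 1 ∧ y' ∈ iOneSet n v := by
  intro n
  induction n with
  | zero =>
    intro y _
    exact ⟨1, Subsingleton.elim _ _, Subsingleton.elim _ _,
      ⟨fun i => i.elim0, fun i j _ => i.elim0, fun i j _ => i.elim0⟩⟩
  | succ n ih =>
    intro y hy
    obtain ⟨hyd, hyu, hyl⟩ := hy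
    obtain ⟨u, hu, hu0, hui0, hui1⟩ := st16unit v hv1 hadd hneg hmul hunit hvinv (y 0 0) (hyd 0)
    set S : Matrix (Fin n) (Fin n) A :=
      fun i j => y i.succ j.succ - y i.succ 0 * ((u⁻¹:Aˣ):A) * y 0 j.succ with hSdef
    have hprod1 : ∀ i j : Fin n, (1 : WithTop ℤ) ≤ v (y i.succ 0 * ((u⁻¹:Aˣ):A) * y 0 j.succ) := by
      intro i j
      refine le_trans ?_ (st16vmul3 v hmul _ _ _)
      rw [hui0]
      have h1 : (1 : WithTop ℤ) ≤ v (y i.succ 0) := hyl _ _ (Fin.succ_pos i)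
      have h2 : (0 : WithTop ℤ) ≤ v (y 0 j.succ) := hyu _ _ (Fin.succ_pos j)
      calc (1 : WithTop ℤ) = 1 + 0 + 0 := by norm_num
        _ ≤ v (y i.succ 0) + 0 + v (y 0 j.succ) := by
            exact add_le_add (add_le_add h1 (le_refl 0)) h2
    have hS : S ∈ iOneSet n v := by
      refine ⟨fun i => ?_, fun i j hij => ?_, fun i j hij => ?_⟩
      · have : S i i - 1 = (y i.succ i.succ - 1) - y i.succ 0 * ((u⁻¹:Aˣ):A) * y 0 i.succ := by
          exact sub_right_comm _ _ _
        rw [this]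
        exact le_trans (le_min (hyd i.succ) (hprod1 i i)) (st16vsub v hadd hneg _ _)
      · exact le_trans (le_min (hyu _ _ (Fin.succ_lt_succ_iff.2 hij))
          (le_trans (by norm_num) (hprod1 i j))) (st16vsub v hadd hneg _ _)
      · exact le_trans (le_min (hyl _ _ (Fin.succ_lt_succ_iff.2 hij)) (hprod1 i j))
          (st16vsub v hadd hneg _ _)
    obtain ⟨S', hSS', hS'S, hS'⟩ := ih S hS
    set iu : A := ((u⁻¹:Aˣ):A) with hiu
    have hui : (u:A) * iu = 1 := Units.mul_inv u
    have hiu_u : iu * (u:A) = 1 := Units.inv_mul u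
    have hucl : ∀ t : A, (u:A) * (iu * t) = t := fun t => Units.mul_inv_cancel_left u t
    set c : Fin n → A := fun k => ∑ l, S' k l * y l.succ 0 with hc
    set d : Fin n → A := fun j => ∑ k, y 0 k.succ * S' k j with hd
    set T : A := ∑ k, y 0 k.succ * c k with hT
    have hdapp : ∀ j, d j = ∑ k, y 0 k.succ * S' k j := fun _ => rfl
    have hcapp : ∀ k, c k = ∑ l, S' k l * y l.succ 0 := fun _ => rfl
    have hSapp : ∀ i j, S i j = y i.succ j.succ - y i.succ 0 * iu * y 0 j.succ := fun i j => rfl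
    have hY1 : ∀ i j, y i.succ j.succ = S i j + y i.succ 0 * iu * y 0 j.succ := by
      intro i j; rw [hSapp]; noncomm_ring
    have hSS'app : ∀ i l, (∑ k, S i k * S' k l) = if i = l then (1:A) else 0 := by
      intro i l
      have h1 := congrFun (congrFun hSS' i) l
      rw [Matrix.mul_apply] at h1
      rw [h1, Matrix.one_apply]
    have hS'Sapp : ∀ i l, (∑ k, S' i k * S k l) = if i = l then (1:A) else 0 := by
      intro i l
      have h1 := congrFun (congrFun hS'S i) l
      rw [Matrix.mul_apply] at h1
      rw [h1, Matrix.one_apply]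
    have hScS : ∀ i : Fin n, (∑ k, S i k * c k) = y i.succ 0 := by
      intro i
      rw [hc]
      simp only [Finset.mul_sum]
      rw [Finset.sum_comm]
      have h5 : ∀ l, (∑ k, S i k * (S' k l * y l.succ 0)) = (if i = l then (1:A) else 0) * y l.succ 0 := by
        intro l
        simp only [← mul_assoc]
        rw [← Finset.sum_mul, hSS'app]
      simp only [h5]
      simp [Finset.sum_ite_eq']
    have hdT : (∑ k, d k * y k.succ 0) = T := by
      rw [hd, hT]
      simp only [Finset.sum_mul]
      rw [Finset.sum_comm]
      congr 1; funext k
      rw [hc, Finset.mul_sum]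
      congr 1; funext l
      rw [mul_assoc]
    have hdS : ∀ j : Fin n, (∑ k, d k * S k j) = y 0 j.succ := by
      intro j
      simp only [hdapp, Finset.sum_mul]
      rw [Finset.sum_comm]
      have h5 : ∀ l, (∑ k, y 0 l.succ * S' l k * S k j) = y 0 l.succ * (if l = j then (1:A) else 0) := by
        intro l
        simp only [mul_assoc]
        rw [← Finset.mul_sum]
        congr 1
        exact hS'Sapp l j
      simp only [h5]
      simp [Finset.sum_ite_eq']
    refine ⟨Matrix.of fun i j =>
      Fin.cases (Fin.cases (iu + iu * T * iu) (fun i' => -(c i' * iu)) i)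
        (fun j' => Fin.cases (-(iu * d j')) (fun i' => S' i' j') i) j, ?_, ?_, ?_⟩
    · ext i j
      rw [Matrix.mul_apply, Fin.sum_univ_succ]
      refine Fin.cases ?_ (fun j => ?_) j <;> refine Fin.cases ?_ (fun i => ?_) i
      · -- (0,0)
        simp only [Matrix.of_apply, Fin.cases_zero, Fin.cases_succ, Matrix.one_apply_eq]
        rw [← hu]
        have hterm : ∀ k : Fin n, y 0 k.succ * -(c k * iu) = -(y 0 k.succ * c k * iu) := by
          intro k; noncomm_ring
        simp only [hterm]
        rw [Finset.sum_neg_distrib, ← Finset.sum_mul, ← hT,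
          show (u:A) * (iu + iu * T * iu) = (u:A) * iu + (u:A) * iu * T * iu by noncomm_ring,
          hui]
        noncomm_ring
      · -- (i.succ, 0)
        simp only [Matrix.of_apply, Fin.cases_zero, Fin.cases_succ]
        rw [Matrix.one_apply_ne (Fin.succ_ne_zero i)]
        have hterm : ∀ k : Fin n, y i.succ k.succ * -(c k * iu) =
            -(S i k * c k * iu) - y i.succ 0 * iu * (y 0 k.succ * c k) * iu := by
          intro k; rw [hY1 i k]; noncomm_ring
        simp only [hterm]
        rw [Finset.sum_sub_distrib, Finset.sum_neg_distrib, ← Finset.sum_mul, hScS]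
        have h3 : (∑ k, y i.succ 0 * iu * (y 0 k.succ * c k) * iu)
            = y i.succ 0 * iu * T * iu := by
          rw [hT, Finset.mul_sum, Finset.sum_mul]
        rw [h3]
        noncomm_ring
      · -- (0, j.succ)
        simp only [Matrix.of_apply, Fin.cases_zero, Fin.cases_succ]
        rw [Matrix.one_apply_ne (Fin.succ_ne_zero j).symm]
        rw [← hu,
          show (u:A) * -(iu * d j) = -(d j) by rw [mul_neg, hucl],
          hd]
        simp
      · -- (i.succ, j.succ)
        simp only [Matrix.of_apply, Fin.cases_zero, Fin.cases_succ]
        have hterm : ∀ k : Fin n, y i.succ k.succ * S' k j =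
            S i k * S' k j + y i.succ 0 * iu * (y 0 k.succ * S' k j) := by
          intro k; rw [hY1 i k]; noncomm_ring
        simp only [hterm]
        rw [Finset.sum_add_distrib, hSS'app, ← Finset.mul_sum ]
        simp only [Matrix.one_apply, Fin.succ_inj, hdapp]
        noncomm_ring
    · ext i j
      rw [Matrix.mul_apply, Fin.sum_univ_succ]
      refine Fin.cases ?_ (fun j => ?_) j <;> refine Fin.cases ?_ (fun i => ?_) i
      · -- (0,0)
        simp only [Matrix.of_apply, Fin.cases_zero, Fin.cases_succ, Matrix.one_apply_eq]
        rw [← hu]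
        have hterm : ∀ k : Fin n, -(iu * d k) * y k.succ 0 = -(iu * (d k * y k.succ 0)) := by
          intro k; noncomm_ring
        simp only [hterm]
        rw [Finset.sum_neg_distrib, ← Finset.mul_sum, hdT,
          show (iu + iu * T * iu) * (u:A) = iu * (u:A) + iu * T * (iu * (u:A)) by noncomm_ring,
          hiu_u]
        noncomm_ring
      · -- (i.succ, 0)
        simp only [Matrix.of_apply, Fin.cases_zero, Fin.cases_succ]
        rw [Matrix.one_apply_ne (Fin.succ_ne_zero i)]
        rw [← hu,
          show -(c i * iu) * (u:A) = -(c i * (iu * (u:A))) by noncomm_ring,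
          hiu_u, mul_one, hc]
        simp
      · -- (0, j.succ)
        simp only [Matrix.of_apply, Fin.cases_zero, Fin.cases_succ]
        rw [Matrix.one_apply_ne (Fin.succ_ne_zero j).symm]
        have hterm : ∀ k : Fin n, -(iu * d k) * y k.succ j.succ =
            -(iu * (d k * S k j)) - iu * (d k * y k.succ 0) * (iu * y 0 j.succ) := by
          intro k; rw [hY1 k j]; noncomm_ring
        simp only [hterm]
        rw [Finset.sum_sub_distrib, Finset.sum_neg_distrib]
        rw [show (∑ k, iu * (d k * S k j)) = iu * ∑ k, d k * S k j from (Finset.mul_sum _ _ _).symm,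
          hdS]
        rw [show (∑ k, iu * (d k * y k.succ 0) * (iu * y 0 j.succ))
            = iu * (∑ k, d k * y k.succ 0) * (iu * y 0 j.succ) by
          rw [Finset.mul_sum, Finset.sum_mul], hdT]
        noncomm_ring
      · -- (i.succ, j.succ)
        simp only [Matrix.of_apply, Fin.cases_zero, Fin.cases_succ]
        have hterm : ∀ k : Fin n, S' i k * y k.succ j.succ =
            S' i k * S k j + S' i k * y k.succ 0 * (iu * y 0 j.succ) := by
          intro k; rw [hY1 k j]; noncomm_ring
        simp only [hterm]
        rw [Finset.sum_add_distrib, hS'Sapp]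
        rw [show (∑ k, S' i k * y k.succ 0 * (iu * y 0 j.succ))
            = (∑ k, S' i k * y k.succ 0) * (iu * y 0 j.succ) from (Finset.sum_mul _ _ _).symm ]
        simp only [Matrix.one_apply, Fin.succ_inj, hcapp]
        noncomm_ring
    · -- membership
      have hc_v : ∀ k, (1 : WithTop ℤ) ≤ v (c k) := by
        intro k
        rw [hcapp]
        refine st16vsum v hv0 hadd _ _ _ (fun l _ => ?_)
        refine le_trans ?_ (hmul _ _)
        calc (1 : WithTop ℤ) = 0 + 1 := by norm_num
          _ ≤ v (S' k l) + v (y l.succ 0) :=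
            add_le_add (st16nonneg v hv1 hadd hneg n S' hS' k l) (hyl _ _ (Fin.succ_pos l))
      have hd_v : ∀ j, (0 : WithTop ℤ) ≤ v (d j) := by
        intro j
        rw [hdapp]
        refine st16vsum v hv0 hadd _ _ _ (fun k _ => ?_)
        refine le_trans ?_ (hmul _ _)
        calc (0 : WithTop ℤ) = 0 + 0 := by norm_num
          _ ≤ v (y 0 k.succ) + v (S' k j) :=
            add_le_add (hyu _ _ (Fin.succ_pos k)) (st16nonneg v hv1 hadd hneg n S' hS' k j)
      have hT_v : (1 : WithTop ℤ) ≤ v T := by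
        rw [hT]
        refine st16vsum v hv0 hadd _ _ _ (fun k _ => ?_)
        refine le_trans ?_ (hmul _ _)
        calc (1 : WithTop ℤ) = 0 + 1 := by norm_num
          _ ≤ v (y 0 k.succ) + v (c k) := add_le_add (hyu _ _ (Fin.succ_pos k)) (hc_v k)
      refine ⟨fun i => ?_, fun i j => ?_, fun i j => ?_⟩
      · refine Fin.cases ?_ (fun i => ?_) i
        · simp only [Matrix.of_apply, Fin.cases_zero]
          rw [show iu + iu * T * iu - 1 = (iu - 1) + iu * T * iu by noncomm_ring]
          refine le_trans (le_min hui1 ?_) (hadd _ _)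
          refine le_trans ?_ (st16vmul3 v hmul _ _ _)
          rw [hui0]
          calc (1 : WithTop ℤ) = 0 + 1 + 0 := by norm_num
            _ ≤ 0 + v T + 0 := by
                exact add_le_add (add_le_add (le_refl _) hT_v) (le_refl _)
        · simp only [Matrix.of_apply, Fin.cases_succ, Fin.cases_zero]
          exact hS'.1 i
      · refine Fin.cases ?_ (fun j => ?_) j
        · exact fun hij => absurd hij (Fin.not_lt_zero _)
        · refine Fin.cases ?_ (fun i => ?_) i <;> intro hij
          · simp only [Matrix.of_apply, Fin.cases_zero, Fin.cases_succ]
            rw [hneg]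
            refine le_trans ?_ (hmul _ _)
            rw [hui0, zero_add]
            exact hd_v j
          · simp only [Matrix.of_apply, Fin.cases_succ]
            exact hS'.2.1 i j (by simpa using hij)
      · refine Fin.cases ?_ (fun i' => ?_) i
        · exact fun hij => absurd hij (Fin.not_lt_zero _)
        · refine Fin.cases ?_ (fun j' => ?_) j <;> intro hij
          · simp only [Matrix.of_apply, Fin.cases_zero, Fin.cases_succ]
            rw [hneg]
            refine le_trans ?_ (hmul _ _)
            rw [hui0, add_zero]
            exact hc_v i'
          · simp only [Matrix.of_apply, Fin.cases_succ]
            exact hS'.2.2 i' j' (by simpa using hij)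

end Inv

section Main
variable {A : Type*} [Ring A] (v : A → WithTop ℤ) (ϖ : Aˣ)
variable (hv0 : ∀ x : A, v x = ⊤ ↔ x = 0)
    (hv1 : v 1 = 0)
    (hadd : ∀ x y : A, min (v x) (v y) ≤ v (x + y))
    (hneg : ∀ x : A, v (-x) = v x)
    (hmul : ∀ x y : A, v x + v y ≤ v (x * y))
    (hϖpos : (0 : WithTop ℤ) < v (ϖ : A))
    (hϖl : ∀ x : A, v ((ϖ : A) * x) = v (ϖ : A) + v x)
    (hunit : ∀ x : A, (1 : WithTop ℤ) ≤ v (x - 1) → IsUnit x)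
    (hvinv : ∀ u : Aˣ, v (u : A) = 0 → v ((u⁻¹ : Aˣ) : A) = 0)

include hv0 hv1 hadd hneg hmul hϖpos hϖl hunit hvinv in
theorem st16main : ∀ (n : ℕ) (a : Fin n → ℤ), Monotone a →
    ∀ (z x y : Matrix (Fin n) (Fin n) A),
      z ∈ zSet n v ϖ → x ∈ iOneSet n v → y ∈ iOneSet n v →
      ∀ (w : Equiv.Perm (Fin n)) (b : Fin n → ℤ),
      (∀ i j, (x * (Matrix.diagonal (fun i => ((ϖ^(a i):Aˣ):A)) * z) * y) i j
          = if i = w j then ((ϖ^(b j):Aˣ):A) else 0) →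
      ∀ j, w j = j ∧ b j = a j := by
  obtain ⟨e, he, he1⟩ := st16e v ϖ hv0 hv1 hϖpos
  intro n
  induction n with
  | zero => intro _ _ _ _ _ _ _ _ _ _ _ j; exact j.elim0
  | succ n ih =>
    intro a ha z x y hz hx hy w b hMw
    obtain ⟨hzd, hzu, hzl⟩ := hz
    obtain ⟨hxd, hxu, hxl⟩ := hx
    obtain ⟨y', hyy', hy'y, hy'⟩ :=
      st16inv v hv0 hv1 hadd hneg hmul hunit hvinv (n+1) y hy
    obtain ⟨u, hu, hu0, hui0, hui1⟩ :=
      st16unit v hv1 hadd hneg hmul hunit hvinv (x 0 0) (hxd 0)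
    set τ : Matrix (Fin (n+1)) (Fin (n+1)) A :=
      Matrix.diagonal (fun i => ((ϖ^(a i):Aˣ):A)) with hτdef
    set U : Matrix (Fin (n+1)) (Fin (n+1)) A := τ * z with hUdef
    have hUapp : ∀ i j, U i j = ((ϖ^(a i):Aˣ):A) * z i j := by
      intro i j; rw [hUdef, hτdef, Matrix.diagonal_mul]
    have hU00 : U 0 0 = ((ϖ^(a 0):Aˣ):A) := by rw [hUapp, hzd, mul_one]
    have hUk0 : ∀ k : Fin (n+1), k ≠ 0 → U k 0 = 0 := by
      intro k hk
      rw [hUapp, hzl k 0 (Fin.pos_iff_ne_zero.2 hk), mul_zero]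
    have hxUeq : ∀ i' jj : Fin (n+1), (x * U) i' jj
        = ((ϖ^(b (w.symm i')):Aˣ):A) * y' (w.symm i') jj := by
      intro i' jj
      have h1 : x * U = (x * U * y) * y' := by
        rw [mul_assoc (x*U) y y', hyy', mul_one]
      rw [h1, Matrix.mul_apply]
      rw [Finset.sum_eq_single (w.symm i') ?_ ?_]
      · rw [hMw]
        rw [if_pos (by rw [Equiv.apply_symm_apply])]
      · intro k _ hk
        rw [hMw, if_neg, zero_mul]
        intro hcon
        exact hk (by rw [hcon, Equiv.symm_apply_apply])
      · intro hcon
        exact absurd (Finset.mem_univ _) hcon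
    have hcol0 : ∀ i' : Fin (n+1), (x * U) i' 0 = x i' 0 * ((ϖ^(a 0):Aˣ):A) := by
      intro i'
      rw [Matrix.mul_apply]
      rw [Finset.sum_eq_single 0 ?_ ?_]
      · rw [hU00]
      · intro k _ hk; rw [hUk0 k hk, mul_zero]
      · intro hcon; exact absurd (Finset.mem_univ _) hcon
    have hvx00 : v (x 0 0) = 0 := st16vone v hv1 hadd hneg _ (hxd 0)
    have hvL : v (x 0 0 * ((ϖ^(a 0):Aˣ):A)) = ((a 0 * e : ℤ) : WithTop ℤ) := by
      refine le_antisymm ?_ ?_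
      · have h2 : ((ϖ^(a 0):Aˣ):A) = ((u⁻¹:Aˣ):A) * (x 0 0 * ((ϖ^(a 0):Aˣ):A)) := by
          rw [← hu, Units.inv_mul_cancel_left]
        calc v (x 0 0 * ((ϖ^(a 0):Aˣ):A))
            = 0 + v (x 0 0 * ((ϖ^(a 0):Aˣ):A)) := (zero_add _).symm
          _ ≤ v ((u⁻¹:Aˣ):A) + v (x 0 0 * ((ϖ^(a 0):Aˣ):A)) := by rw [hui0]
          _ ≤ v (((u⁻¹:Aˣ):A) * (x 0 0 * ((ϖ^(a 0):Aˣ):A))) := hmul _ _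
          _ = v ((ϖ^(a 0):Aˣ):A) := by rw [← h2]
          _ = ((a 0 * e : ℤ) : WithTop ℤ) := st16vPone v ϖ hv1 hϖl e he _
      · calc ((a 0 * e : ℤ) : WithTop ℤ) = 0 + ((a 0 * e : ℤ) : WithTop ℤ) := (zero_add _).symm
          _ ≤ v (x 0 0) + v ((ϖ^(a 0):Aˣ):A) := by
              rw [hvx00, st16vPone v ϖ hv1 hϖl e he]
          _ ≤ _ := hmul _ _
    set r : Fin (n+1) := w.symm 0 with hrdef
    have eq0 : x 0 0 * ((ϖ^(a 0):Aˣ):A) = ((ϖ^(b r):Aˣ):A) * y' r 0 := by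
      rw [← hcol0 0, hxUeq 0 0]
    have hw0 : w 0 = 0 ∧ b 0 = a 0 := by
      by_cases hr : r = 0
      · have hw00 : w 0 = 0 := by
          have := Equiv.apply_symm_apply w 0
          rw [← hrdef, hr] at this
          exact this
        refine ⟨hw00, ?_⟩
        have h3 := eq0
        rw [hr] at h3
        have h4 : v (x 0 0 * ((ϖ^(a 0):Aˣ):A)) = ((b 0 * e : ℤ) : WithTop ℤ) := by
          rw [h3, st16vP v ϖ hϖl e he, st16diag0 v hv1 hadd hneg _ y' hy' 0, add_zero]
        rw [hvL] at h4
        have h5 : a 0 * e = b 0 * e := by exact_mod_cast h4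
        nlinarith
      · exfalso
        have hry0 : (1 : WithTop ℤ) ≤ v (y' r 0) := hy'.2.2 r 0 (Fin.pos_iff_ne_zero.2 hr)
        have h4 : ((a 0 * e : ℤ) : WithTop ℤ) = ((b r * e : ℤ) : WithTop ℤ) + v (y' r 0) := by
          rw [← hvL, eq0, st16vP v ϖ hϖl e he]
        have hytop : v (y' r 0) ≠ ⊤ := by
          intro hcon
          rw [hcon, add_top] at h4
          exact absurd h4 WithTop.coe_ne_top
        lift v (y' r 0) to ℤ using hytop with c hc
        have hc1 : (1:ℤ) ≤ c := by exact_mod_cast hry0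
        have h5 : a 0 * e = b r * e + c := by exact_mod_cast h4
        have hbr : b r + 1 ≤ a 0 := by nlinarith
        -- the j = r equation
        have eqr : (x * U) 0 r = ((ϖ^(b r):Aˣ):A) * y' r r := hxUeq 0 r
        have hRv : v ((x * U) 0 r) = ((b r * e : ℤ) : WithTop ℤ) := by
          rw [eqr, st16vP v ϖ hϖl e he, st16diag0 v hv1 hadd hneg _ y' hy' r, add_zero]
        have hLv : ((b r * e + 1 : ℤ) : WithTop ℤ) ≤ v ((x * U) 0 r) := by
          rw [Matrix.mul_apply]
          refine st16vsum v hv0 hadd _ _ _ (fun k _ => ?_)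
          have hx0k : (0 : WithTop ℤ) ≤ v (x 0 k) := by
            rcases eq_or_ne k 0 with hk | hk
            · rw [hk, hvx00]
            · exact hxu 0 k (Fin.pos_iff_ne_zero.2 hk)
          rcases lt_trichotomy k r with hkr | hkr | hkr
          · -- k < r
            refine le_trans ?_ (hmul _ _)
            rw [hUapp, st16vP v ϖ hϖl e he]
            have hzge : (1 : WithTop ℤ) ≤ (e : WithTop ℤ) + v (z k r) := by
              have := hzu k r hkr
              rw [hϖl, he] at this
              exact this
            rcases eq_or_ne (v (z k r)) ⊤ with hztop | hztop
            · rw [hztop, add_top, add_top]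
              exact le_top
            · lift v (z k r) to ℤ using hztop with z0 hz0
              have hz1 : (1:ℤ) ≤ e + z0 := by exact_mod_cast hzge
              have hak : a 0 ≤ a k := ha (Fin.zero_le k)
              calc ((b r * e + 1 : ℤ) : WithTop ℤ)
                  ≤ ((0 + (a k * e + z0) : ℤ) : WithTop ℤ) := by
                    refine WithTop.coe_le_coe.2 ?_
                    nlinarith
                _ = 0 + (((a k * e:ℤ) : WithTop ℤ) + (z0 : WithTop ℤ)) := by push_cast; ring
                _ ≤ v (x 0 k) + (((a k * e:ℤ) : WithTop ℤ) + (z0 : WithTop ℤ)) := by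
                    exact add_le_add_left hx0k _
          · -- k = r
            rw [hkr]
            rw [hkr] at hx0k
            refine le_trans ?_ (hmul _ _)
            rw [hUapp, hzd, mul_one, st16vPone v ϖ hv1 hϖl e he]
            have hak : a 0 ≤ a r := ha (Fin.zero_le r)
            calc ((b r * e + 1 : ℤ) : WithTop ℤ)
                ≤ ((0 + a r * e : ℤ) : WithTop ℤ) := by
                  refine WithTop.coe_le_coe.2 ?_
                  nlinarith
              _ = 0 + ((a r * e : ℤ) : WithTop ℤ) := by push_cast; ring
              _ ≤ v (x 0 r) + ((a r * e : ℤ) : WithTop ℤ) := add_le_add_left hx0k _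
          · -- r < k
            rw [hUapp, hzl k r hkr, mul_zero, mul_zero, st16vzero v hv0]
            exact le_top
        rw [hRv] at hLv
        have := WithTop.coe_le_coe.1 hLv
        omega
    -- reduction to size n
    have hw00 : w 0 = 0 := hw0.1
    have hwsymm0 : w.symm 0 = 0 := w.symm_apply_eq.2 hw00.symm
    have hwsne : ∀ j : Fin n, w j.succ ≠ 0 := by
      intro j hcon
      have h1 : j.succ = (0 : Fin (n+1)) := by
        apply w.injective; rw [hcon, hw00]
      exact Fin.succ_ne_zero j h1
    have hwsne' : ∀ j : Fin n, w.symm j.succ ≠ 0 := by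
      intro j hcon
      have h1 : j.succ = (0 : Fin (n+1)) := by
        apply w.symm.injective; rw [hcon, hwsymm0]
      exact Fin.succ_ne_zero j h1
    set w' : Equiv.Perm (Fin n) := {
      toFun := fun j => (w j.succ).pred (hwsne j)
      invFun := fun j => (w.symm j.succ).pred (hwsne' j)
      left_inv := by
        intro j
        simp only [Fin.succ_pred, Equiv.symm_apply_apply, Fin.pred_succ]
      right_inv := by
        intro j
        simp only [Fin.succ_pred, Equiv.apply_symm_apply, Fin.pred_succ] } with hw'def
    have hw'app : ∀ j, (w' j).succ = w j.succ := by
      intro j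
      exact Fin.succ_pred (w j.succ) (hwsne j)
    set a' : Fin n → ℤ := fun i => a i.succ with ha'def
    have ha' : Monotone a' := fun i j hij => ha (Fin.succ_le_succ_iff.2 hij)
    set z' : Matrix (Fin n) (Fin n) A := fun i j => z i.succ j.succ with hz'def
    set Y : Matrix (Fin n) (Fin n) A := fun i j => y i.succ j.succ with hYdef
    set X : Matrix (Fin n) (Fin n) A :=
      fun i j => x i.succ j.succ - x i.succ 0 * ((u⁻¹:Aˣ):A) * x 0 j.succ with hXdef
    have hz' : z' ∈ zSet n v ϖ :=
      ⟨fun i => hzd i.succ, fun i j hij => hzu _ _ (Fin.succ_lt_succ_iff.2 hij),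
        fun i j hij => hzl _ _ (Fin.succ_lt_succ_iff.2 hij)⟩
    have hY : Y ∈ iOneSet n v :=
      ⟨fun i => hy.1 i.succ, fun i j hij => hy.2.1 _ _ (Fin.succ_lt_succ_iff.2 hij),
        fun i j hij => hy.2.2 _ _ (Fin.succ_lt_succ_iff.2 hij)⟩
    have hprodx : ∀ i j : Fin n, (1 : WithTop ℤ) ≤ v (x i.succ 0 * ((u⁻¹:Aˣ):A) * x 0 j.succ) := by
      intro i j
      refine le_trans ?_ (st16vmul3 v hmul _ _ _)
      rw [hui0]
      calc (1 : WithTop ℤ) = 1 + 0 + 0 := by norm_num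
        _ ≤ v (x i.succ 0) + 0 + v (x 0 j.succ) := by
            exact add_le_add (add_le_add (hxl _ _ (Fin.succ_pos i)) (le_refl _))
              (hxu _ _ (Fin.succ_pos j))
    have hX : X ∈ iOneSet n v := by
      refine ⟨fun i => ?_, fun i j hij => ?_, fun i j hij => ?_⟩
      · have h1 : X i i - 1 = (x i.succ i.succ - 1) - x i.succ 0 * ((u⁻¹:Aˣ):A) * x 0 i.succ :=
          sub_right_comm _ _ _
        rw [h1]
        exact le_trans (le_min (hxd i.succ) (hprodx i i)) (st16vsub v hadd hneg _ _)
      · exact le_trans (le_min (hxu _ _ (Fin.succ_lt_succ_iff.2 hij))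
          (le_trans (by norm_num) (hprodx i j))) (st16vsub v hadd hneg _ _)
      · exact le_trans (le_min (hxl _ _ (Fin.succ_lt_succ_iff.2 hij)) (hprodx i j))
          (st16vsub v hadd hneg _ _)
    have hQ : ∀ (i l : Fin n), (∑ k, X i k * U k.succ l.succ)
        = (x * U) i.succ l.succ - x i.succ 0 * ((u⁻¹:Aˣ):A) * (x * U) 0 l.succ := by
      intro i l
      have h1 : ∀ i' : Fin (n+1), (x*U) i' l.succ
          = x i' 0 * U 0 l.succ + ∑ k : Fin n, x i' k.succ * U k.succ l.succ := by
        intro i'; rw [Matrix.mul_apply, Fin.sum_univ_succ]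
      rw [h1, h1]
      have hterm : ∀ k : Fin n, X i k * U k.succ l.succ
          = x i.succ k.succ * U k.succ l.succ
            - x i.succ 0 * ((u⁻¹:Aˣ):A) * (x 0 k.succ * U k.succ l.succ) := by
        intro k
        show (x i.succ k.succ - x i.succ 0 * ((u⁻¹:Aˣ):A) * x 0 k.succ) * U k.succ l.succ = _
        noncomm_ring
      simp only [hterm]
      rw [Finset.sum_sub_distrib, ← Finset.mul_sum]
      rw [mul_add (x i.succ 0 * ((u⁻¹:Aˣ):A))]
      have hcancel : x i.succ 0 * ((u⁻¹:Aˣ):A) * (x 0 0 * U 0 l.succ)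
          = x i.succ 0 * U 0 l.succ := by
        rw [← hu, mul_assoc (x i.succ 0) _ _, Units.inv_mul_cancel_left]
      rw [hcancel]
      abel
    have hM' : ∀ i j : Fin n,
        (X * (Matrix.diagonal (fun i0 => ((ϖ^(a' i0):Aˣ):A)) * z') * Y) i j
          = if i = w' j then ((ϖ^(b j.succ):Aˣ):A) else 0 := by
      intro i j
      have hU' : ∀ k l : Fin n,
          (Matrix.diagonal (fun i0 => ((ϖ^(a' i0):Aˣ):A)) * z') k l = U k.succ l.succ := by
        intro k l
        rw [Matrix.diagonal_mul, hUapp]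
      have h2 : (X * (Matrix.diagonal (fun i0 => ((ϖ^(a' i0):Aˣ):A)) * z') * Y) i j
          = ∑ l : Fin n, (∑ k, X i k * U k.succ l.succ) * y l.succ j.succ := by
        rw [Matrix.mul_apply]
        refine Finset.sum_congr rfl (fun l _ => ?_)
        rw [Matrix.mul_apply]
        simp only [hU']
        rfl
      rw [h2]
      simp only [hQ]
      have hterm2 : ∀ l : Fin n,
          ((x*U) i.succ l.succ - x i.succ 0 * ((u⁻¹:Aˣ):A) * (x*U) 0 l.succ) * y l.succ j.succ
          = (x*U) i.succ l.succ * y l.succ j.succ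
            - x i.succ 0 * ((u⁻¹:Aˣ):A) * ((x*U) 0 l.succ * y l.succ j.succ) := by
        intro l; noncomm_ring
      simp only [hterm2]
      rw [Finset.sum_sub_distrib, ← Finset.mul_sum]
      have h3 : ∀ i' : Fin (n+1), (∑ l : Fin n, (x*U) i' l.succ * y l.succ j.succ)
          = (x*U*y) i' j.succ - (x*U) i' 0 * y 0 j.succ := by
        intro i'
        conv_rhs => rw [Matrix.mul_apply, Fin.sum_univ_succ]
        abel
      rw [h3 i.succ, h3 0]
      rw [hMw i.succ j.succ, hMw 0 j.succ]
      rw [if_neg (show ¬(0 : Fin (n+1)) = w j.succ from fun hcon => (hwsne j) hcon.symm)]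
      rw [hcol0 i.succ, hcol0 0]
      have hcancel2 : x i.succ 0 * ((u⁻¹:Aˣ):A) * (x 0 0 * ((ϖ^(a 0):Aˣ):A) * y 0 j.succ)
          = x i.succ 0 * (((ϖ^(a 0):Aˣ):A) * y 0 j.succ) := by
        rw [← hu, mul_assoc ((u:A)) _ _, mul_assoc (x i.succ 0) _ _, Units.inv_mul_cancel_left]
      rw [show (0:A) - x 0 0 * ((ϖ^(a 0):Aˣ):A) * y 0 j.succ
          = -(x 0 0 * ((ϖ^(a 0):Aˣ):A) * y 0 j.succ) from zero_sub _]
      rw [mul_neg, hcancel2]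
      simp only [← hw'app, Fin.succ_inj]
      rw [show x i.succ 0 * ((ϖ^(a 0):Aˣ):A) * y 0 j.succ
          = x i.succ 0 * (((ϖ^(a 0):Aˣ):A) * y 0 j.succ) from mul_assoc _ _ _]
      abel
    have hres := ih a' ha' z' X Y hz' hX hY w' (fun j => b j.succ) hM'
    intro j
    refine Fin.cases ?_ (fun j' => ?_) j
    · exact hw0
    · obtain ⟨h6, h7⟩ := hres j'
      constructor
      · rw [← hw'app j', h6]
      · exact h7
end Main

/-- Let `A = A(E)` be a central simple algebra with hereditary order `𝔄(E)` normalized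
by `E^×`, radical `P(E)`, attached valuation `v`, and uniformizer `ϖ`.  If `τ ∈ Δ` and
`z ∈ 𝒵` satisfy `Ĩ¹ (τ z) Ĩ¹ ∩ 𝐖 ≠ ∅`, then `Ĩ¹ (τ z) Ĩ¹ ∩ 𝐖 = {τ}`. -/
theorem statement16 {A : Type*} [Ring A] (m' : ℕ)
    (v : A → WithTop ℤ) (ϖ : Aˣ)
    (hv0 : ∀ x : A, v x = ⊤ ↔ x = 0)
    (hv1 : v 1 = 0)
    (hadd : ∀ x y : A, min (v x) (v y) ≤ v (x + y))
    (hneg : ∀ x : A, v (-x) = v x)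
    (hmul : ∀ x y : A, v x + v y ≤ v (x * y))
    (hϖpos : (0 : WithTop ℤ) < v (ϖ : A))
    (hϖl : ∀ x : A, v ((ϖ : A) * x) = v (ϖ : A) + v x)
    (hϖr : ∀ x : A, v (x * (ϖ : A)) = v (ϖ : A) + v x)
    (hunit : ∀ x : A, (1 : WithTop ℤ) ≤ v (x - 1) → IsUnit x)
    (hvinv : ∀ u : Aˣ, v (u : A) = 0 → v ((u⁻¹ : Aˣ) : A) = 0)
    (τ z : Matrix (Fin m') (Fin m') A)
    (hτ : τ ∈ deltaSet m' ϖ) (hz : z ∈ zSet m' v ϖ)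
    (hne : ({y | ∃ x₁ ∈ iOneSet m' v, ∃ x₂ ∈ iOneSet m' v, y = x₁ * (τ * z) * x₂} ∩
      wSet m' ϖ).Nonempty) :
    {y | ∃ x₁ ∈ iOneSet m' v, ∃ x₂ ∈ iOneSet m' v, y = x₁ * (τ * z) * x₂} ∩
      wSet m' ϖ = {τ} := by
  obtain ⟨a, ha, ha0, hτeq⟩ := hτ
  have key : ∀ M ∈ ({y | ∃ x₁ ∈ iOneSet m' v, ∃ x₂ ∈ iOneSet m' v, y = x₁ * (τ * z) * x₂} ∩
      wSet m' ϖ), M = τ := by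
    rintro M ⟨⟨x₁, hx₁, x₂, hx₂, hMeq⟩, w, b, hMw⟩
    have hMw' : ∀ i j, (x₁ * (Matrix.diagonal (fun i => ((ϖ^(a i):Aˣ):A)) * z) * x₂) i j
        = if i = w j then ((ϖ^(b j):Aˣ):A) else 0 := by
      intro i j
      rw [← hτeq, ← hMeq]
      exact hMw i j
    have hres := st16main v ϖ hv0 hv1 hadd hneg hmul hϖpos hϖl hunit hvinv m' a ha z x₁ x₂
      hz hx₁ hx₂ w b hMw'
    ext i j
    rw [hMw i j, hτeq, Matrix.diagonal_apply]
    obtain ⟨hw, hb⟩ := hres j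
    rw [hw, hb]
    by_cases hij : i = j
    · subst hij; simp
    · simp [hij]
  obtain ⟨M₀, hM₀⟩ := hne
  apply Set.eq_singleton_iff_unique_mem.2
  refine ⟨?_, key⟩
  have h1 := key M₀ hM₀
  rw [h1] at hM₀
  exact hM₀
end
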